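/- arXiv:2209.08136 — 4 statements merged into one kernel-verified Lean document; each statement's English description precedes it below -/
import Mathlib

section
/- Let a ∈ (ℓ₀)^{r×r} and φ a compactly supported continuous refinable vector function with φ = C_a φ, where C_a f := 2∑_{k∈ℤ} a(k) f(2·−k). Then for all n ∈ ℕ and j = 0,…,m with φ ∈ (C^m)^r, φ^{(j)}(2^{−n}k) = 2^{(j+1)n} (a_n ∗ u_{φ,j})(k) for every k ∈ ℤ, where a_n := 2^{−n} S_a^n(δ I_r) and u_{φ,j} := φ^{(j)}|_ℤ. -/
/-- The vector subdivision operator `(S_a v)(j) = 2 ∑_{k∈ℤ} v(k) a(j−2k)`. -/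
noncomputable def sdOp {r : ℕ} (a : ℤ → Matrix (Fin r) (Fin r) ℂ)
    (v : ℤ → Matrix (Fin r) (Fin r) ℂ) (j : ℤ) : Matrix (Fin r) (Fin r) ℂ :=
  (2 : ℂ) • ∑ᶠ k : ℤ, v k * a (j - 2 * k)

/-- The Dirac sequence `δ I_r`. -/
noncomputable def diracI {r : ℕ} : ℤ → Matrix (Fin r) (Fin r) ℂ :=
  fun k => if k = 0 then 1 else 0

/-- `a_n := 2^{−n} S_a^n (δ I_r)`. -/
noncomputable def aN {r : ℕ} (a : ℤ → Matrix (Fin r) (Fin r) ℂ) (n : ℕ) :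
    ℤ → Matrix (Fin r) (Fin r) ℂ :=
  fun k => ((2 : ℂ) ^ n)⁻¹ • ((sdOp a)^[n] diracI) k

open Function Matrix

section Aux

variable {r : ℕ} {a : ℤ → Matrix (Fin r) (Fin r) ℂ}

lemma support_sdOp (ha : (Function.support a).Finite)
    {v : ℤ → Matrix (Fin r) (Fin r) ℂ} (hv : (Function.support v).Finite) :
    (Function.support (sdOp a v)).Finite := by
  apply Set.Finite.subset (Set.Finite.image (fun p : ℤ × ℤ => 2 * p.1 + p.2) (hv.prod ha))
  intro q hq
  by_contra hc
  apply hq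
  have hz : ∀ k : ℤ, v k * a (q - 2 * k) = 0 := by
    intro k
    by_contra h0
    exact hc ⟨(k, q - 2 * k),
      ⟨left_ne_zero_of_mul h0, right_ne_zero_of_mul h0⟩, by simp⟩
  simp [sdOp, hz]

lemma support_iter (ha : (Function.support a).Finite) :
    ∀ n : ℕ, (Function.support ((sdOp a)^[n] (diracI (r := r)))).Finite
  | 0 => by
      apply Set.Finite.subset (Set.finite_singleton (0 : ℤ))
      intro k hk
      simp only [Set.mem_singleton_iff]
      by_contra h
      exact Function.mem_support.mp hk (by simp [diracI, h])
  | n + 1 => by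
      rw [Function.iterate_succ_apply']
      exact support_sdOp ha (support_iter ha n)

lemma real_two_smul (w : Fin r → ℂ) : (2 : ℝ) • w = (2 : ℂ) • w := by
  ext i
  simp [Complex.real_smul]

lemma sum_mulVec {ι : Type*} (s : Finset ι) (f : ι → Matrix (Fin r) (Fin r) ℂ)
    (w : Fin r → ℂ) : (∑ i ∈ s, f i) *ᵥ w = ∑ i ∈ s, f i *ᵥ w :=
  map_sum (Matrix.mulVec.addMonoidHomLeft w) f s

lemma mulVec_sum {ι : Type*} (s : Finset ι) (M : Matrix (Fin r) (Fin r) ℂ)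
    (f : ι → Fin r → ℂ) : M *ᵥ (∑ i ∈ s, f i) = ∑ i ∈ s, M *ᵥ f i := by
  classical
  induction s using Finset.cons_induction with
  | empty => simp
  | cons i s hi ih => rw [Finset.sum_cons, Finset.sum_cons, Matrix.mulVec_add, ih]

/-- One-step refinement relation for the `j`-th derivative. -/
lemma refine_deriv {m : ℕ} (ha : (Function.support a).Finite)
    {φ : ℝ → Fin r → ℂ} (hφc : ContDiff ℝ (m : ℕ∞) φ)
    (href : ∀ x : ℝ, φ x = (2 : ℂ) • ∑ᶠ k : ℤ, (a k).mulVec (φ (2 * x - (k : ℝ)))) :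
    ∀ j : ℕ, j ≤ m → ∀ x : ℝ,
      iteratedDeriv j φ x
        = (2 : ℂ) ^ (j + 1) • ∑ᶠ k : ℤ, (a k).mulVec (iteratedDeriv j φ (2 * x - (k : ℝ))) := by
  intro j
  induction j with
  | zero =>
      intro _ x
      simpa [iteratedDeriv_zero] using href x
  | succ j ih =>
      intro hj x
      have hj' : j ≤ m := Nat.le_of_succ_le hj
      set ψ := iteratedDeriv j φ with hψ
      set ψ' := iteratedDeriv (j + 1) φ with hψ'
      have hd : Differentiable ℝ ψ := by
        apply hφc.differentiable_iteratedDeriv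
        exact_mod_cast Nat.lt_of_succ_le hj
      have hsupp : ∀ y : ℝ, ∀ g : ℝ → Fin r → ℂ,
          Function.support (fun k : ℤ => (a k).mulVec (g (2 * y - (k : ℝ))))
            ⊆ (ha.toFinset : Set ℤ) := by
        intro y g k hk
        simp only [Function.mem_support] at hk
        simp only [Finset.coe_sort_coe, Set.Finite.coe_toFinset, Function.mem_support]
        intro h0
        exact hk (by simp [h0])
      have hfun : ψ = fun y : ℝ =>
          (2 : ℂ) ^ (j + 1) • ∑ k ∈ ha.toFinset, (a k).mulVec (ψ (2 * y - (k : ℝ))) := by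
        funext y
        rw [ih hj' y, finsum_eq_sum_of_support_subset _ (hsupp y ψ)]
      have key : HasDerivAt
          (fun y : ℝ => (2 : ℂ) ^ (j + 1) • ∑ k ∈ ha.toFinset, (a k).mulVec (ψ (2 * y - (k : ℝ))))
          ((2 : ℂ) ^ (j + 1) •
            ∑ k ∈ ha.toFinset, (a k).mulVec ((2 : ℝ) • ψ' (2 * x - (k : ℝ)))) x := by
        apply HasDerivAt.fun_const_smul
        apply HasDerivAt.fun_sum
        intro k _
        have hin : HasDerivAt (fun y : ℝ => 2 * y - (k : ℝ)) 2 x := by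
          simpa using ((hasDerivAt_id x).const_mul (2 : ℝ)).sub_const (k : ℝ)
        have hψd : HasDerivAt ψ (ψ' (2 * x - (k : ℝ))) (2 * x - (k : ℝ)) := by
          have := (hd (2 * x - (k : ℝ))).hasDerivAt
          rwa [hψ', iteratedDeriv_succ, ← hψ]
        have hcomp : HasDerivAt (fun y : ℝ => ψ (2 * y - (k : ℝ)))
            ((2 : ℝ) • ψ' (2 * x - (k : ℝ))) x := by have h := hψd.scomp x hin; exact h
        have hL := (((a k).mulVecLin.restrictScalars ℝ).toContinuousLinearMap).hasFDerivAt
          (x := ψ (2 * x - (k : ℝ)))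
        have := hL.comp_hasDerivAt x hcomp
        simpa [Function.comp_def, Matrix.mulVecLin_apply, Matrix.mulVec_smul] using this
      have hder : deriv ψ x = (2 : ℂ) ^ (j + 1) •
          ∑ k ∈ ha.toFinset, (a k).mulVec ((2 : ℝ) • ψ' (2 * x - (k : ℝ))) := by
        conv_lhs => rw [hfun]
        exact key.deriv
      have hpsx : ψ' x = deriv ψ x := by rw [hψ', hψ, iteratedDeriv_succ]
      rw [finsum_eq_sum_of_support_subset _ (hsupp x ψ'), hpsx, hder]
      have hterm : ∀ k : ℤ, (a k).mulVec ((2 : ℝ) • ψ' (2 * x - (k : ℝ)))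
          = (2 : ℂ) • (a k).mulVec (ψ' (2 * x - (k : ℝ))) := by
        intro k
        rw [real_two_smul, Matrix.mulVec_smul]
      simp only [hterm, ← Finset.smul_sum, smul_smul, ← pow_succ]

lemma support_mulVec_subset {c : ℤ → Matrix (Fin r) (Fin r) ℂ}
    (hc : (Function.support c).Finite) (g : ℤ → Fin r → ℂ) :
    Function.support (fun k : ℤ => (c k).mulVec (g k)) ⊆ (hc.toFinset : Set ℤ) := by
  intro k hk
  simp only [Function.mem_support] at hk
  simp only [Finset.coe_sort_coe, Set.Finite.coe_toFinset, Function.mem_support]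
  intro h0
  exact hk (by simp [h0])

/-- Iterated (in scale) refinement relation for the `j`-th derivative. -/
lemma scale_iter {m : ℕ} (ha : (Function.support a).Finite)
    {φ : ℝ → Fin r → ℂ} (hφc : ContDiff ℝ (m : ℕ∞) φ)
    (href : ∀ x : ℝ, φ x = (2 : ℂ) • ∑ᶠ k : ℤ, (a k).mulVec (φ (2 * x - (k : ℝ))))
    {j : ℕ} (hj : j ≤ m) :
    ∀ n : ℕ, ∀ x : ℝ,
      iteratedDeriv j φ x = (2 : ℂ) ^ (j * n) •
        ∑ᶠ ℓ : ℤ, (((sdOp a)^[n] diracI) ℓ).mulVec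
          (iteratedDeriv j φ ((2 : ℝ) ^ n * x - (ℓ : ℝ))) := by
  intro n
  induction n with
  | zero =>
      intro x
      rw [finsum_eq_single _ (0 : ℤ) (by intro ℓ hℓ; simp [diracI, hℓ])]
      simp [diracI, Matrix.one_mulVec]
  | succ n IH =>
      intro x
      have hBn := support_iter (a := a) ha n
      have hsd1 := support_sdOp ha hBn
      -- step 1 : IH with a Finset sum
      have h1 : iteratedDeriv j φ x = (2 : ℂ) ^ (j * n) •
          ∑ ℓ ∈ hBn.toFinset, (((sdOp a)^[n] diracI) ℓ).mulVec
            (iteratedDeriv j φ ((2 : ℝ) ^ n * x - (ℓ : ℝ))) := by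
        rw [IH x, finsum_eq_sum_of_support_subset _ (support_mulVec_subset hBn _)]
      -- step 2 : refine each value one more scale
      have hstep : ∀ ℓ : ℤ, iteratedDeriv j φ ((2 : ℝ) ^ n * x - (ℓ : ℝ))
          = (2 : ℂ) ^ (j + 1) • ∑ k ∈ ha.toFinset, (a k).mulVec
              (iteratedDeriv j φ ((2 : ℝ) ^ (n + 1) * x - ((2 * ℓ + k : ℤ) : ℝ))) := by
        intro ℓ
        rw [refine_deriv ha hφc href j hj ((2 : ℝ) ^ n * x - (ℓ : ℝ)),
          finsum_eq_sum_of_support_subset _ (support_mulVec_subset ha _)]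
        congr 1
        apply Finset.sum_congr rfl
        intro k _
        congr 1
        push_cast
        ring
      have h2 : iteratedDeriv j φ x = (2 : ℂ) ^ (j * n + (j + 1)) •
          ∑ ℓ ∈ hBn.toFinset, ∑ k ∈ ha.toFinset,
            (((sdOp a)^[n] diracI) ℓ * a k).mulVec
              (iteratedDeriv j φ ((2 : ℝ) ^ (n + 1) * x - ((2 * ℓ + k : ℤ) : ℝ))) := by
        rw [h1]
        have hterm : ∀ ℓ : ℤ, (((sdOp a)^[n] diracI) ℓ).mulVec
              (iteratedDeriv j φ ((2 : ℝ) ^ n * x - ℓ))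
            = (2 : ℂ) ^ (j + 1) • ∑ k ∈ ha.toFinset,
                (((sdOp a)^[n] diracI) ℓ * a k).mulVec
                  (iteratedDeriv j φ ((2 : ℝ) ^ (n + 1) * x - ((2 * ℓ + k : ℤ) : ℝ))) := by
          intro ℓ
          rw [hstep ℓ, Matrix.mulVec_smul, mulVec_sum]
          congr 1
          apply Finset.sum_congr rfl
          intro k _
          rw [Matrix.mulVec_mulVec]
        simp only [hterm, ← Finset.smul_sum, smul_smul, ← pow_add]
      -- step 3 : reindex the inner sum over a common index set
      have h3 : ∀ ℓ ∈ hBn.toFinset, ∑ k ∈ ha.toFinset,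
            (((sdOp a)^[n] diracI) ℓ * a k).mulVec
              (iteratedDeriv j φ ((2 : ℝ) ^ (n + 1) * x - ((2 * ℓ + k : ℤ) : ℝ)))
          = ∑ q ∈ hsd1.toFinset ∪ hBn.toFinset.biUnion
                (fun ℓ => ha.toFinset.map (addLeftEmbedding (2 * ℓ))),
              (((sdOp a)^[n] diracI) ℓ * a (q - 2 * ℓ)).mulVec
                (iteratedDeriv j φ ((2 : ℝ) ^ (n + 1) * x - (q : ℝ))) := by
        intro ℓ hℓ
        have himg : ∑ q ∈ ha.toFinset.map (addLeftEmbedding (2 * ℓ)),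
                (((sdOp a)^[n] diracI) ℓ * a (q - 2 * ℓ)).mulVec
                  (iteratedDeriv j φ ((2 : ℝ) ^ (n + 1) * x - (q : ℝ)))
            = ∑ k ∈ ha.toFinset,
              (((sdOp a)^[n] diracI) ℓ * a k).mulVec
                (iteratedDeriv j φ ((2 : ℝ) ^ (n + 1) * x - ((2 * ℓ + k : ℤ) : ℝ))) := by
          rw [Finset.sum_map]
          apply Finset.sum_congr rfl
          intro k _
          have h1 : addLeftEmbedding (2 * ℓ) k = 2 * ℓ + k := addLeftEmbedding_apply _ _
          rw [h1]
          have hk : 2 * ℓ + k - 2 * ℓ = k := by ring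
          rw [hk]
        rw [← himg]
        apply Finset.sum_subset
        · exact (Finset.subset_biUnion_of_mem
            (fun ℓ => ha.toFinset.map (addLeftEmbedding (2 * ℓ))) hℓ).trans
            Finset.subset_union_right
        · intro q _ hq
          have ha0 : a (q - 2 * ℓ) = 0 := by
            by_contra h0
            exact hq (Finset.mem_map.mpr ⟨q - 2 * ℓ, ha.mem_toFinset.mpr h0,
              by rw [addLeftEmbedding_apply]; ring⟩)
          rw [ha0, mul_zero, Matrix.zero_mulVec]
      -- step 4 : identify with the subdivision coefficients at level `n+1`
      have hsd : ∀ q : ℤ, sdOp a ((sdOp a)^[n] diracI) q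
          = (2 : ℂ) • ∑ ℓ ∈ hBn.toFinset, ((sdOp a)^[n] diracI) ℓ * a (q - 2 * ℓ) := by
        intro q
        unfold sdOp
        congr 1
        apply finsum_eq_sum_of_support_subset
        intro ℓ hℓ
        have hb0 : ((sdOp a)^[n] diracI) ℓ ≠ 0 := by
          intro h0
          apply Function.mem_support.mp hℓ
          show ((sdOp a)^[n] diracI) ℓ * a (q - 2 * ℓ) = 0
          rw [h0, zero_mul]
        exact Finset.mem_coe.mpr (hBn.mem_toFinset.mpr hb0)
      have h5 : ∑ᶠ q : ℤ, (((sdOp a)^[n + 1] diracI) q).mulVec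
            (iteratedDeriv j φ ((2 : ℝ) ^ (n + 1) * x - (q : ℝ)))
          = (2 : ℂ) • ∑ ℓ ∈ hBn.toFinset, ∑ q ∈ hsd1.toFinset ∪ hBn.toFinset.biUnion
                (fun ℓ => ha.toFinset.map (addLeftEmbedding (2 * ℓ))),
              (((sdOp a)^[n] diracI) ℓ * a (q - 2 * ℓ)).mulVec
                (iteratedDeriv j φ ((2 : ℝ) ^ (n + 1) * x - (q : ℝ))) := by
        have hit : (sdOp a)^[n + 1] (diracI (r := r)) = sdOp a ((sdOp a)^[n] diracI) :=
          Function.iterate_succ_apply' _ _ _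
        have hsupp' : (Function.support ((sdOp a)^[n+1] (diracI (r := r)))).Finite := by
          rw [hit]; exact hsd1
        rw [finsum_eq_sum_of_support_subset _ (support_mulVec_subset hsupp' _)]
        have hTsub : hsupp'.toFinset ⊆ hsd1.toFinset ∪ hBn.toFinset.biUnion
            (fun ℓ => ha.toFinset.map (addLeftEmbedding (2 * ℓ))) := by
          apply Finset.Subset.trans _ Finset.subset_union_left
          intro q hq
          rw [Set.Finite.mem_toFinset] at hq ⊢
          rwa [← hit]
        rw [Finset.sum_subset hTsub (by
          intro q _ hq
          have h0 : ((sdOp a)^[n+1] (diracI (r := r))) q = 0 := by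
            by_contra h0
            exact hq (hsupp'.mem_toFinset.mpr h0)
          rw [h0, Matrix.zero_mulVec])]
        rw [Finset.sum_congr rfl (fun q _ => by
          rw [hit, hsd q, Matrix.smul_mulVec, sum_mulVec])]
        rw [← Finset.smul_sum, Finset.sum_comm]
      -- put everything together
      have hsc : (2 : ℂ) ^ (j * n + (j + 1)) = (2 : ℂ) ^ (j * (n + 1)) * 2 := by
        rw [← pow_succ]
        congr 1
      rw [h2, Finset.sum_congr rfl h3, h5, smul_smul, ← hsc]
end Aux

/-- If `φ ∈ (C^m)^r` is compactly supported, continuous and refinable (`φ = C_a φ`), then for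
`j ≤ m`, all `n` and `k ∈ ℤ`: `φ^{(j)}(2^{−n}k) = 2^{(j+1)n} (a_n ∗ u_{φ,j})(k)` with
`u_{φ,j} := φ^{(j)}|_ℤ`. -/
theorem deriv_dyadic_values {r : ℕ} (m : ℕ) (a : ℤ → Matrix (Fin r) (Fin r) ℂ)
    (ha : (Function.support a).Finite)
    (φ : ℝ → Fin r → ℂ) (hφc : ContDiff ℝ (m : ℕ∞) φ) (hφs : HasCompactSupport φ)
    (href : ∀ x : ℝ, φ x = (2 : ℂ) • ∑ᶠ k : ℤ, (a k).mulVec (φ (2 * x - (k : ℝ))))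
    (j : ℕ) (hj : j ≤ m) (n : ℕ) (k : ℤ) :
    iteratedDeriv j φ (((2 : ℝ) ^ n)⁻¹ * (k : ℝ)) =
      (2 : ℂ) ^ ((j + 1) * n) •
        ∑ᶠ ℓ : ℤ, (aN a n (k - ℓ)).mulVec (iteratedDeriv j φ (ℓ : ℝ)) := by
  set ψ := iteratedDeriv j φ with hψ
  have hpt : ∀ ℓ : ℤ, (2 : ℝ) ^ n * (((2 : ℝ) ^ n)⁻¹ * (k : ℝ)) - (ℓ : ℝ)
      = ((k - ℓ : ℤ) : ℝ) := by
    intro ℓ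
    have h2 : (2 : ℝ) ^ n ≠ 0 := by positivity
    push_cast
    field_simp
  have hL := scale_iter ha hφc href hj n (((2 : ℝ) ^ n)⁻¹ * (k : ℝ))
  simp only [hpt] at hL
  -- reindex ℓ ↦ k - ℓ on the left-hand side sum
  have hre : ∑ᶠ ℓ : ℤ, (((sdOp a)^[n] diracI) ℓ).mulVec (ψ ((k - ℓ : ℤ) : ℝ))
      = ∑ᶠ ℓ : ℤ, (((sdOp a)^[n] diracI) (k - ℓ)).mulVec (ψ ((ℓ : ℤ) : ℝ)) := by
    have := finsum_comp_equiv (Equiv.subLeft k)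
      (f := fun ℓ : ℤ => (((sdOp a)^[n] diracI) ℓ).mulVec (ψ ((k - ℓ : ℤ) : ℝ)))
    rw [← this]
    apply finsum_congr
    intro ℓ
    simp [Equiv.subLeft]
  -- rewrite the right-hand side via `aN`
  have hRHS : (2 : ℂ) ^ ((j + 1) * n) •
      ∑ᶠ ℓ : ℤ, (aN a n (k - ℓ)).mulVec (ψ (ℓ : ℝ))
      = (2 : ℂ) ^ (j * n) •
        ∑ᶠ ℓ : ℤ, (((sdOp a)^[n] diracI) (k - ℓ)).mulVec (ψ ((ℓ : ℤ) : ℝ)) := by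
    have haN : ∀ ℓ : ℤ, (aN a n (k - ℓ)).mulVec (ψ (ℓ : ℝ))
        = ((2 : ℂ) ^ n)⁻¹ • (((sdOp a)^[n] diracI) (k - ℓ)).mulVec (ψ ((ℓ : ℤ) : ℝ)) := by
      intro ℓ
      rw [aN, Matrix.smul_mulVec]
    simp only [haN]
    rw [← smul_finsum, smul_smul]
    congr 1
    have h2 : (2 : ℂ) ^ n ≠ 0 := by
      apply pow_ne_zero
      norm_num
    field_simp
    rw [← pow_add]
    congr 1
    ring
  rw [hRHS, ← hre]
  exact hL
end

section
/- Let ν_a ∈ (ℓ₀)^{1×r} with \widehat{ν_a}(0) ≠ 0, and suppose p = ∑_{k∈ℤ}(p∗ν_a)(k) φ(·−k) holds for all polynomials p of degree at most m_a−1, where φ ∈ (C^m)^r is compactly supported and m ≤ m_a−1. Then for j = 0,…,m, the polynomial identity p_{m_a−j−1} = p_{m_a−1} ∗ (ν_a ∗ u_{φ,j}) holds, where p_ℓ(x) := x^ℓ/ℓ! and u_{φ,j} := φ^{(j)}|_ℤ, with p∗v := ∑_{k∈ℤ} p(·−k)v(k) for a polynomial p and finitely supported sequence v. -/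
/-- The Fourier series of a vector-valued sequence. -/
noncomputable def fhatV {q : ℕ} (u : ℤ → Fin q → ℂ) (ξ : ℝ) : Fin q → ℂ :=
  ∑ᶠ k : ℤ, Complex.exp (-(Complex.I * (k : ℂ) * (ξ : ℂ))) • u k

open Polynomial Topology

noncomputable def dotCLM {r : ℕ} (v : Fin r → ℂ) : (Fin r → ℂ) →L[ℝ] ℂ :=
  ∑ i, v i • (ContinuousLinearMap.proj (R := ℝ) (φ := fun _ : Fin r => ℂ) i)

lemma dotCLM_apply {r : ℕ} (v w : Fin r → ℂ) : dotCLM v w = dotProduct v w := by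
  simp [dotCLM, dotProduct, ContinuousLinearMap.sum_apply, smul_eq_mul]

lemma iteratedDeriv_zero_fun {F : Type*} [NormedAddCommGroup F] [NormedSpace ℝ F] (n : ℕ) :
    iteratedDeriv n (fun _ : ℝ => (0:F)) = fun _ => 0 := by
  induction n with
  | zero => simp
  | succ n ih => rw [iteratedDeriv_succ, ih]; simp

lemma itd_clm_comp {r : ℕ} {f : ℝ → Fin r → ℂ} {n : WithTop ℕ∞} (hf : ContDiff ℝ n f)
    (L : (Fin r → ℂ) →L[ℝ] ℂ) {j : ℕ} (hj : (j : WithTop ℕ∞) ≤ n) (x : ℝ) :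
    iteratedDeriv j (fun y => L (f y)) x = L (iteratedDeriv j f x) := by
  rw [iteratedDeriv_eq_iteratedFDeriv, iteratedDeriv_eq_iteratedFDeriv]
  rw [show (fun y => L (f y)) = L ∘ f from rfl, L.iteratedFDeriv_comp_left (hf.contDiffAt (x := x)) hj]
  simp

lemma itd_comp_sub_const {F : Type*} [NormedAddCommGroup F] [NormedSpace ℝ F]
    (n : ℕ) (f : ℝ → F) (s : ℝ) :
    iteratedDeriv n (fun y => f (y - s)) = fun t => iteratedDeriv n f (t - s) := by
  simpa [sub_eq_add_neg] using iteratedDeriv_comp_add_const n f (-s)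

lemma itd_fin_sum {ι : Type*} (S : Finset ι) (f : ι → ℝ → ℂ) {j : ℕ}
    (h : ∀ i ∈ S, ContDiff ℝ j (f i)) (x : ℝ) :
    iteratedDeriv j (fun y => ∑ i ∈ S, f i y) x = ∑ i ∈ S, iteratedDeriv j (f i) x := by
  simp_rw [iteratedDeriv_eq_iteratedFDeriv]
  rw [show (fun y => ∑ i ∈ S, f i y) = (∑ i ∈ S, f i ·) from rfl, iteratedFDeriv_sum h]
  simp

lemma itd_pow_mul (n : ℕ) (c : ℂ) : ∀ j : ℕ,
    iteratedDeriv j (fun x : ℝ => ((x:ℂ))^n * c)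
      = fun x : ℝ => (n.descFactorial j : ℂ) * ((x:ℂ))^(n-j) * c
  | 0 => by simp
  | (j+1) => by
    rw [iteratedDeriv_succ, itd_pow_mul n c j]
    funext x
    have hd : HasDerivAt (fun x : ℝ => (n.descFactorial j : ℂ) * ((x:ℂ))^(n-j) * c)
        ((n.descFactorial j : ℂ) * (((n - j : ℕ) : ℂ) * ((x:ℂ))^(n-j-1)) * c) x :=
      (((hasDerivAt_pow (n-j) ((x:ℝ):ℂ)).comp_ofReal).const_mul _).mul_const _
    rw [hd.deriv, Nat.descFactorial_succ, show n - (j+1) = n - j - 1 by omega]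
    push_cast
    ring

lemma int_in_bounded_finite {K : Set ℝ} (hK : Bornology.IsBounded K) :
    {l : ℤ | (l:ℝ) ∈ K}.Finite := by
  obtain ⟨R, hR⟩ := hK.subset_closedBall 0
  apply Set.Finite.subset (Set.finite_Icc (⌈-R⌉) (⌊R⌋))
  intro l hl
  have := hR hl
  rw [Metric.mem_closedBall, Real.dist_eq, sub_zero, abs_le] at this
  constructor
  · exact_mod_cast Int.ceil_le.mpr this.1
  · exact_mod_cast Int.le_floor.mpr this.2

lemma finset_sum_dotProduct {r : ℕ} {ι : Type*} (s : Finset ι) (v : ι → Fin r → ℂ)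
    (w : Fin r → ℂ) :
    dotProduct (∑ i ∈ s, v i) w = ∑ i ∈ s, dotProduct (v i) w := by
  simp only [dotProduct, Finset.sum_apply, Finset.sum_mul]
  exact Finset.sum_comm

/-- If `ν_a ∈ (ℓ₀)^{1×r}` with `\widehat{ν_a}(0) ≠ 0` reproduces all polynomials `p` of degree
at most `m_a−1` through `p = ∑_k (p∗ν_a)(k) φ(·−k)`, with `φ ∈ (C^m)^r` compactly supported and
`m ≤ m_a−1`, then `p_{m_a−j−1} = p_{m_a−1} ∗ (ν_a ∗ u_{φ,j})` for `j = 0,…,m`, where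
`p_ℓ(x) = x^ℓ/ℓ!` and `u_{φ,j} = φ^{(j)}|_ℤ`. -/
theorem polynomial_convolution_identity {r ma m : ℕ} (hma : 1 ≤ ma) (hm : m ≤ ma - 1)
    (ν : ℤ → Fin r → ℂ) (hν : (Function.support ν).Finite) (hν0 : fhatV ν 0 ≠ 0)
    (φ : ℝ → Fin r → ℂ) (hφc : ContDiff ℝ (m : ℕ∞) φ) (hφs : HasCompactSupport φ)
    (hrep : ∀ p : Polynomial ℂ, p.degree ≤ (ma - 1 : ℕ) → ∀ x : ℝ,
      Polynomial.eval (x : ℂ) p =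
        ∑ᶠ k : ℤ, dotProduct
          (fun i => ∑ᶠ l : ℤ, Polynomial.eval (((k : ℂ) - (l : ℂ))) p * ν l i)
          (φ (x - (k : ℝ))))
    (j : ℕ) (hj : j ≤ m) :
    ∀ x : ℝ, ((x : ℂ)) ^ (ma - j - 1) / (Nat.factorial (ma - j - 1) : ℂ) =
      ∑ᶠ k : ℤ, (((x : ℂ) - (k : ℂ)) ^ (ma - 1) / (Nat.factorial (ma - 1) : ℂ)) *
        (∑ᶠ l : ℤ, dotProduct (ν (k - l)) (iteratedDeriv j φ (l : ℝ))) := by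
  intro x
  set n1 := ma - 1 with hn1
  have hjn1 : j ≤ n1 := le_trans hj hm
  have hmaj : ma - j - 1 = n1 - j := by omega
  have hjm : (j : WithTop ℕ∞) ≤ ((m : ℕ∞) : WithTop ℕ∞) := by exact_mod_cast hj
  -- the polynomial p0 and coefficient sequence c
  set p0 : Polynomial ℂ := Polynomial.C ((n1.factorial : ℂ))⁻¹ * Polynomial.X ^ n1 with hp0
  have hp0deg : p0.degree ≤ ((ma - 1 : ℕ) : WithBot ℕ) := Polynomial.degree_C_mul_X_pow_le _ _
  have hp0eval : ∀ z : ℂ, Polynomial.eval z p0 = z ^ n1 * ((n1.factorial : ℂ))⁻¹ := by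
    intro z
    rw [hp0]
    simp only [Polynomial.eval_mul, Polynomial.eval_C, Polynomial.eval_pow, Polynomial.eval_X]
    ring
  set c : ℤ → Fin r → ℂ :=
    fun k i => ∑ᶠ l : ℤ, Polynomial.eval (((k:ℂ) - (l:ℂ))) p0 * ν l i with hc
  -- support facts for φ
  have hK : IsCompact (tsupport φ) := hφs
  have hsupp_itd : ∀ y : ℝ, y ∉ tsupport φ → iteratedDeriv j φ y = 0 := by
    intro y hy
    have h0 : φ =ᶠ[𝓝 y] (fun _ => 0) := by
      filter_upwards [(isClosed_tsupport φ).isOpen_compl.mem_nhds hy] with z hz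
      exact image_eq_zero_of_notMem_tsupport hz
    rw [Filter.EventuallyEq.iteratedDeriv_eq j h0, iteratedDeriv_zero_fun]
  obtain ⟨R, hR⟩ := hK.isBounded.subset_closedBall 0
  have hRmem : ∀ y : ℝ, y ∈ tsupport φ → |y| ≤ R := by
    intro y hy; have := hR hy
    rwa [Metric.mem_closedBall, Real.dist_eq, sub_zero] at this
  -- KEY STEP A : differentiation of the reproduction identity
  have keyA : ∀ x0 : ℝ, ((x0:ℂ))^(n1-j) * (((n1-j).factorial : ℂ))⁻¹
      = ∑ᶠ k : ℤ, dotProduct (c k) (iteratedDeriv j φ (x0 - (k:ℝ))) := by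
    intro x0
    set S : Finset ℤ := Finset.Icc (⌈x0 - R⌉ - 2) (⌊x0 + R⌋ + 2) with hS
    have hSk : ∀ k : ℤ, k ∉ S → ∀ y : ℝ, |y - x0| ≤ 1 → (y - (k:ℝ)) ∉ tsupport φ := by
      intro k hk y hy hmem
      apply hk
      have h1 : |y - (k:ℝ)| ≤ R := hRmem _ hmem
      rw [hS, Finset.mem_Icc]
      rw [abs_le] at h1 hy
      constructor
      · have : ((⌈x0 - R⌉ - 2 : ℤ) : ℝ) ≤ (k:ℝ) := by
          have := Int.ceil_lt_add_one (x0 - R)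
          push_cast
          linarith
        exact_mod_cast this
      · have : ((k:ℝ)) ≤ ((⌊x0 + R⌋ + 2 : ℤ) : ℝ) := by
          have := Int.sub_one_lt_floor (x0 + R)
          push_cast
          linarith
        exact_mod_cast this
    -- the local finite-sum representation
    set g : ℤ → ℝ → ℂ := fun k y => dotCLM (c k) (φ (y - (k:ℝ))) with hg
    have hgdot : ∀ k y, g k y = dotProduct (c k) (φ (y - (k:ℝ))) := by
      intro k y; rw [hg]; exact dotCLM_apply _ _
    have hshift : ∀ k : ℤ, ContDiff ℝ (m:ℕ∞) (fun y : ℝ => φ (y - (k:ℝ))) :=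
      fun k => hφc.comp (contDiff_id.sub contDiff_const)
    have hgc : ∀ k, ContDiff ℝ (m:ℕ∞) (g k) := by
      intro k
      exact (dotCLM (c k)).contDiff.comp (hshift k)
    have hloc : ∀ y ∈ Metric.ball x0 1,
        ((y:ℂ))^n1 * ((n1.factorial:ℂ))⁻¹ = ∑ k ∈ S, g k y := by
      intro y hy
      have hy1 : |y - x0| ≤ 1 := by
        rw [Metric.mem_ball, Real.dist_eq] at hy; linarith [le_of_lt hy]
      have h1 : Polynomial.eval ((y:ℝ):ℂ) p0
          = ∑ᶠ k : ℤ, dotProduct (c k) (φ (y - (k:ℝ))) := hrep p0 hp0deg y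
      rw [hp0eval] at h1
      rw [h1]
      rw [finsum_eq_sum_of_support_subset _
        (s := S) ?_]
      · exact Finset.sum_congr rfl fun k _ => (hgdot k y).symm
      · intro k hk
        simp only [Function.mem_support, ne_eq] at hk
        by_contra hkS
        apply hk
        have hz : φ (y - (k:ℝ)) = 0 :=
          image_eq_zero_of_notMem_tsupport (hSk k hkS y hy1)
        rw [hz, dotProduct_zero]
    have heq : (fun y : ℝ => ((y:ℂ))^n1 * ((n1.factorial:ℂ))⁻¹)
        =ᶠ[𝓝 x0] (fun y => ∑ k ∈ S, g k y) :=
      Filter.eventuallyEq_of_mem (Metric.ball_mem_nhds _ one_pos) hloc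
    have hder := Filter.EventuallyEq.iteratedDeriv_eq j heq
    rw [itd_pow_mul n1 _ j] at hder
    rw [itd_fin_sum S g (fun k _ => (hgc k).of_le (by exact_mod_cast hj)) x0] at hder
    have hitd : ∀ k : ℤ, iteratedDeriv j (g k) x0
        = dotProduct (c k) (iteratedDeriv j φ (x0 - (k:ℝ))) := by
      intro k
      have h2 : iteratedDeriv j (fun y : ℝ => φ (y - (k:ℝ))) x0
          = iteratedDeriv j φ (x0 - (k:ℝ)) := by
        rw [itd_comp_sub_const]
      rw [hg]
      rw [itd_clm_comp (hshift k) (dotCLM (c k)) hjm x0, h2, dotCLM_apply]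
    simp_rw [hitd] at hder
    have hfin : ∑ᶠ k : ℤ, dotProduct (c k) (iteratedDeriv j φ (x0 - (k:ℝ)))
        = ∑ k ∈ S, dotProduct (c k) (iteratedDeriv j φ (x0 - (k:ℝ))) := by
      apply finsum_eq_sum_of_support_subset
      intro k hk
      simp only [Function.mem_support, ne_eq] at hk
      by_contra hkS
      apply hk
      have hz : iteratedDeriv j φ (x0 - (k:ℝ)) = 0 :=
        hsupp_itd _ (hSk k hkS x0 (by simp))
      rw [hz, dotProduct_zero]
    rw [hfin, ← hder]
    have h3 : ((n1-j).factorial : ℂ) * (n1.descFactorial j : ℂ) = (n1.factorial : ℂ) := by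
      exact_mod_cast congrArg (Nat.cast (R := ℂ)) (Nat.factorial_mul_descFactorial hjn1)
    have h4 : (n1.factorial : ℂ) ≠ 0 := Nat.cast_ne_zero.mpr (Nat.factorial_ne_zero n1)
    have h5 : ((n1-j).factorial : ℂ) ≠ 0 := Nat.cast_ne_zero.mpr (Nat.factorial_ne_zero (n1-j))
    have h6 : (((n1 - j).factorial : ℂ))⁻¹ = (n1.descFactorial j : ℂ) * ((n1.factorial : ℂ))⁻¹ := by
      field_simp
      linear_combination -h3
    rw [h6]
    ring
  -- STEP B : sequences u, w and their supports
  set u : ℤ → Fin r → ℂ := fun l => iteratedDeriv j φ ((l:ℤ):ℝ) with hu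
  have hufin : (Function.support u).Finite := by
    apply Set.Finite.subset (int_in_bounded_finite hK.isBounded)
    intro l hl
    simp only [Function.mem_support, ne_eq] at hl
    by_contra hmem
    exact hl (hsupp_itd _ hmem)
  set w : ℤ → ℂ := fun k => ∑ᶠ l : ℤ, dotProduct (ν (k - l)) (u l) with hw
  set A := hν.toFinset with hA
  set B := hufin.toFinset with hB
  set AB : Finset ℤ := (A ×ˢ B).image (fun p => p.1 + p.2) with hAB
  have hwB : ∀ k, w k = ∑ l ∈ B, dotProduct (ν (k - l)) (u l) := by
    intro k
    apply finsum_eq_sum_of_support_subset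
    intro l hl
    simp only [Function.mem_support, ne_eq] at hl
    rw [Finset.mem_coe, hB, Set.Finite.mem_toFinset, Function.mem_support]
    intro h0
    exact hl (by rw [h0, dotProduct_zero])
  have hw_supp : Function.support w ⊆ ↑AB := by
    intro k hk
    rw [Function.mem_support] at hk
    have hex : ∃ l, dotProduct (ν (k-l)) (u l) ≠ 0 := by
      by_contra h
      push_neg at h
      apply hk
      rw [hw]
      calc (∑ᶠ l : ℤ, dotProduct (ν (k - l)) (u l)) = ∑ᶠ _ : ℤ, (0:ℂ) :=
            finsum_congr h
        _ = 0 := finsum_zero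
    obtain ⟨l, hl⟩ := hex
    have hν' : ν (k - l) ≠ 0 := fun h0 => hl (by rw [h0, zero_dotProduct])
    have hu' : u l ≠ 0 := fun h0 => hl (by rw [h0, dotProduct_zero])
    rw [hAB]
    simp only [Finset.coe_image, Set.mem_image, Finset.mem_coe, Finset.mem_product]
    exact ⟨(k - l, l), ⟨(Set.Finite.mem_toFinset _).mpr hν', (Set.Finite.mem_toFinset _).mpr hu'⟩,
      by omega⟩
  -- polynomials
  set PF : Polynomial ℂ := ∑ k ∈ AB,
    (Polynomial.X - Polynomial.C ((k:ℤ):ℂ))^n1 * Polynomial.C (((n1.factorial:ℂ))⁻¹ * w k)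
    with hPF
  set PG : Polynomial ℂ := Polynomial.X^(n1-j) * Polynomial.C ((((n1-j).factorial:ℂ))⁻¹) with hPG
  have hPFeval : ∀ z : ℂ, Polynomial.eval z PF
      = ∑ k ∈ AB, (z - ((k:ℤ):ℂ))^n1 * (((n1.factorial:ℂ))⁻¹ * w k) := by
    intro z; rw [hPF]; simp [Polynomial.eval_finset_sum]
  have hPGeval : ∀ z : ℂ, Polynomial.eval z PG = z^(n1-j) * ((((n1-j).factorial:ℂ))⁻¹) := by
    intro z
    rw [hPG]
    simp only [Polynomial.eval_mul, Polynomial.eval_pow, Polynomial.eval_X, Polynomial.eval_C]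
  -- target RHS equals eval PF
  have hRHS : ∀ y : ℝ, (∑ᶠ k : ℤ, (((y:ℂ) - (k:ℂ))^n1 / ((n1.factorial) : ℂ)) * w k)
      = Polynomial.eval ((y:ℂ)) PF := by
    intro y
    rw [hPFeval]
    rw [finsum_eq_sum_of_support_subset _ (s := AB) ?_]
    · exact Finset.sum_congr rfl fun k _ => by rw [div_eq_mul_inv]; ring
    · intro k hk
      rw [Function.mem_support] at hk
      apply hw_supp
      rw [Function.mem_support]
      intro h0
      exact hk (by rw [h0, mul_zero])
  -- agreement at the integers
  have hint : ∀ n : ℤ, Polynomial.eval ((n:ℤ):ℂ) PG = Polynomial.eval ((n:ℤ):ℂ) PF := by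
    intro n
    have h1 := keyA ((n:ℤ):ℝ)
    have h2 : ∀ k : ℤ, ((n:ℤ):ℝ) - ((k:ℤ):ℝ) = (((n - k : ℤ)):ℝ) := by
      intro k; push_cast; ring
    simp_rw [h2] at h1
    have h3 : ∀ z : ℤ, iteratedDeriv j φ ((z:ℤ):ℝ) = u z := fun z => rfl
    simp_rw [h3] at h1
    push_cast at h1
    rw [hPGeval, h1]
    -- reindex k ↦ n - l
    rw [← finsum_comp_equiv (Equiv.subLeft n)]
    simp only [Equiv.subLeft_apply, sub_sub_cancel]
    -- now a finite sum over B
    rw [finsum_eq_sum_of_support_subset _ (s := B) ?_]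
    swap
    · intro l hl
      rw [Function.mem_support] at hl
      rw [Finset.mem_coe, hB, Set.Finite.mem_toFinset, Function.mem_support]
      intro h0
      exact hl (by rw [h0, dotProduct_zero])
    -- compute eval PF at n
    rw [hPFeval]
    have hwB' : ∀ k : ℤ, (((n:ℤ):ℂ) - ((k:ℤ):ℂ))^n1 * (((n1.factorial:ℂ))⁻¹ * w k)
        = ∑ l ∈ B, (((n:ℤ):ℂ) - ((k:ℤ):ℂ))^n1 * ((n1.factorial:ℂ))⁻¹
            * dotProduct (ν (k - l)) (u l) := by
      intro k
      rw [hwB k, Finset.mul_sum, Finset.mul_sum]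
      exact Finset.sum_congr rfl fun l _ => by ring
    simp_rw [hwB']
    rw [Finset.sum_comm]
    apply Finset.sum_congr rfl
    intro l hlB
    -- for fixed l : reindex k = l' + l over A
    have himg : (A.image (fun l' : ℤ => l' + l)) ⊆ AB := by
      intro k hk
      simp only [Finset.mem_image] at hk
      obtain ⟨l', hl', rfl⟩ := hk
      rw [hAB]
      apply Finset.mem_image.mpr
      exact ⟨(l', l), Finset.mem_product.mpr ⟨hl', hlB⟩, rfl⟩
    have hvan : ∀ k ∈ AB, k ∉ A.image (fun l' : ℤ => l' + l) →
        (((n:ℤ):ℂ) - ((k:ℤ):ℂ))^n1 * ((n1.factorial:ℂ))⁻¹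
          * dotProduct (ν (k - l)) (u l) = 0 := by
      intro k _ hk
      have : ν (k - l) = 0 := by
        by_contra hne
        apply hk
        apply Finset.mem_image.mpr
        exact ⟨k - l, (Set.Finite.mem_toFinset _).mpr hne, by omega⟩
      rw [this, zero_dotProduct, mul_zero]
    rw [← Finset.sum_subset himg hvan]
    rw [Finset.sum_image (by intro a _ b _ h; simp only at h; omega)]
    -- identify with dotProduct (c (n - l)) (u l)
    have hcl : c (n - l) = ∑ l' ∈ A,
        ((((n:ℤ):ℂ) - ((l:ℤ):ℂ) - ((l':ℤ):ℂ))^n1 * ((n1.factorial:ℂ))⁻¹) • ν l' := by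
      funext i
      rw [Finset.sum_apply]
      rw [show c (n - l) i
        = ∑ᶠ l' : ℤ, Polynomial.eval ((((n - l : ℤ)):ℂ) - ((l':ℤ):ℂ)) p0 * ν l' i from rfl]
      rw [finsum_eq_sum_of_support_subset _ (s := A) ?_]
      · apply Finset.sum_congr rfl
        intro l' _
        rw [hp0eval]
        simp only [Pi.smul_apply, smul_eq_mul]
        push_cast
        ring
      · intro l' hl'
        rw [Function.mem_support] at hl'
        rw [Finset.mem_coe, hA, Set.Finite.mem_toFinset, Function.mem_support]
        intro h0
        exact hl' (by rw [h0, Pi.zero_apply, mul_zero])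
    rw [hcl, finset_sum_dotProduct]
    apply Finset.sum_congr rfl
    intro l' _
    rw [smul_dotProduct]
    have : ((l' + l : ℤ) : ℤ) - l = l' := by omega
    rw [this]
    rw [smul_eq_mul]
    push_cast
    ring
  -- the two polynomials are equal
  have hPFPG : PG = PF := by
    apply Polynomial.eq_of_infinite_eval_eq
    apply Set.Infinite.mono (s := Set.range (Int.cast : ℤ → ℂ))
    · rintro z ⟨n, rfl⟩
      exact hint n
    · exact Set.infinite_range_of_injective Int.cast_injective
  -- conclusion
  calc ((x:ℂ))^(ma - j - 1) / ((Nat.factorial (ma - j - 1)) : ℂ)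
      = Polynomial.eval ((x:ℂ)) PG := by
        rw [hPGeval, hmaj, div_eq_mul_inv]
    _ = Polynomial.eval ((x:ℂ)) PF := by rw [hPFPG]
    _ = ∑ᶠ k : ℤ, (((x:ℂ) - (k:ℂ))^n1 / ((n1.factorial) : ℂ)) * w k := (hRHS x).symm
end

section
/- Let a ∈ (ℓ₀)^{r×r}, u ∈ (ℓ₀)^r, both supported in [−N,N], and let η : ℝ → ℂ^r be continuous with support in [−N,N]. Define u_n := a_n ∗ u with \widehat{a_n}(ξ) := \widehat{a}(2^{n−1}ξ)···\widehat{a}(ξ). Suppose lim_{n→∞} sup_{k∈ℤ} ‖u_n(k) 2^{(τ+1)n} − η(2^{−n}k)‖ = 0 for some τ ≥ 0. Then lim_{n→∞} 2^{τn} \widehat{u_n}(2^{−n}ξ) = \widehat{η}(ξ) for every ξ ∈ ℝ, where \widehat{η}(ξ) := ∫_ℝ η(x)e^{−ixξ}dx. -/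
open MeasureTheory

/-- The Fourier series of a matrix-valued sequence. -/
noncomputable def fhat {p q : ℕ} (u : ℤ → Matrix (Fin p) (Fin q) ℂ) (ξ : ℝ) :
    Matrix (Fin p) (Fin q) ℂ :=
  ∑ᶠ k : ℤ, Complex.exp (-(Complex.I * (k : ℂ) * (ξ : ℂ))) • u k

/-- Convolution of a matrix-valued sequence with a vector-valued sequence. -/
noncomputable def convMV {r : ℕ} (b : ℤ → Matrix (Fin r) (Fin r) ℂ)
    (u : ℤ → Fin r → ℂ) (k : ℤ) : Fin r → ℂ :=
  ∑ᶠ l : ℤ, (b (k - l)).mulVec (u l)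

/-- The Fourier transform of a vector function. -/
noncomputable def ft {q : ℕ} (f : ℝ → Fin q → ℂ) (ξ : ℝ) : Fin q → ℂ :=
  ∫ x : ℝ, Complex.exp (-(Complex.I * (x : ℂ) * (ξ : ℂ))) • f x

/-! ### Auxiliary lemmas -/

lemma norm_exp_aux (k : ℤ) (ξ : ℝ) : ‖Complex.exp (-(Complex.I * (k:ℂ) * (ξ:ℂ)))‖ = 1 := by
  have h : -(Complex.I * (k:ℂ) * (ξ:ℂ)) = ((-((k:ℝ)*ξ) : ℝ) : ℂ) * Complex.I := by
    push_cast; ring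
  rw [h, Complex.norm_exp_ofReal_mul_I]

lemma integral_exp_aux (m : ℤ) (hm : m ≠ 0) :
    ∫ ξ in (0:ℝ)..(2*Real.pi), Complex.exp ((Complex.I * (m:ℂ)) * (ξ:ℝ)) = 0 := by
  have hc : Complex.I * (m:ℂ) ≠ 0 :=
    mul_ne_zero Complex.I_ne_zero (by exact_mod_cast hm)
  rw [integral_exp_mul_complex hc]
  have h1 : Complex.I * (m:ℂ) * ((2*Real.pi : ℝ):ℂ) = (m:ℂ) * (2 * (Real.pi:ℂ) * Complex.I) := by
    push_cast; ring
  rw [h1, Complex.exp_int_mul_two_pi_mul_I]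
  simp

lemma key_scalar (s : Finset ℤ) (c : ℤ → ℂ) (m : ℤ) :
    (∫ ξ in (0:ℝ)..(2*Real.pi),
      Complex.exp (Complex.I*(m:ℂ)*(ξ:ℝ)) * (∑ k ∈ s, Complex.exp (-(Complex.I*(k:ℂ)*(ξ:ℝ))) * c k))
      = if m ∈ s then ((2*Real.pi : ℝ):ℂ) * c m else 0 := by
  have h1 : ∀ ξ : ℝ, Complex.exp (Complex.I*(m:ℂ)*(ξ:ℝ)) * (∑ k ∈ s, Complex.exp (-(Complex.I*(k:ℂ)*(ξ:ℝ))) * c k)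
      = ∑ k ∈ s, Complex.exp ((Complex.I*((m:ℂ) - (k:ℂ)))*(ξ:ℝ)) * c k := by
    intro ξ
    rw [Finset.mul_sum]
    refine Finset.sum_congr rfl fun k _ => ?_
    rw [← mul_assoc, ← Complex.exp_add]
    congr 2
    ring
  simp_rw [h1]
  rw [intervalIntegral.integral_finset_sum]
  · have h2 : ∀ k ∈ s, (∫ ξ in (0:ℝ)..(2*Real.pi), Complex.exp ((Complex.I*((m:ℂ) - (k:ℂ)))*(ξ:ℝ)) * c k)
        = if k = m then ((2*Real.pi : ℝ):ℂ) * c m else 0 := by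
      intro k _
      rw [intervalIntegral.integral_mul_const]
      by_cases hkm : k = m
      · subst hkm
        simp [intervalIntegral.integral_const, Complex.real_smul]
      · have : (m:ℂ) - (k:ℂ) = ((m - k : ℤ) : ℂ) := by push_cast; ring
        rw [this, integral_exp_aux (m - k) (by omega), zero_mul]
        simp [hkm]
    rw [Finset.sum_congr rfl h2, Finset.sum_ite_eq' s m]
  · intro k _
    apply Continuous.intervalIntegrable
    fun_prop

lemma fhat_eq_sum {p q : ℕ} (u : ℤ → Matrix (Fin p) (Fin q) ℂ) {s : Finset ℤ}
    (hsub : Function.support u ⊆ ↑s) (ξ : ℝ) :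
    fhat u ξ = ∑ k ∈ s, Complex.exp (-(Complex.I * (k : ℂ) * (ξ : ℂ))) • u k := by
  refine finsum_eq_finset_sum_of_support_subset _ ?_
  intro k hk
  have : u k ≠ 0 := by intro h0; apply hk; simp [h0]
  exact hsub this

lemma fhatV_eq_sum {q : ℕ} (u : ℤ → Fin q → ℂ) {s : Finset ℤ}
    (hsub : Function.support u ⊆ ↑s) (ξ : ℝ) :
    fhatV u ξ = ∑ k ∈ s, Complex.exp (-(Complex.I * (k : ℂ) * (ξ : ℂ))) • u k := by
  refine finsum_eq_finset_sum_of_support_subset _ ?_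
  intro k hk
  have : u k ≠ 0 := by intro h0; apply hk; simp [h0]
  exact hsub this

lemma fhat_apply_eq_sum {p q : ℕ} (u : ℤ → Matrix (Fin p) (Fin q) ℂ) {s : Finset ℤ}
    (hsub : Function.support u ⊆ ↑s) (ξ : ℝ) (i : Fin p) (j : Fin q) :
    fhat u ξ i j = ∑ k ∈ s, Complex.exp (-(Complex.I * (k : ℂ) * (ξ : ℂ))) * u k i j := by
  rw [fhat_eq_sum u hsub ξ]
  simp [Matrix.sum_apply, Matrix.smul_apply, smul_eq_mul]

lemma coeff_eq_of_fhat_eq {p q : ℕ} (u v : ℤ → Matrix (Fin p) (Fin q) ℂ)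
    (hufin : (Function.support u).Finite) (hvfin : (Function.support v).Finite)
    (h : ∀ ξ : ℝ, fhat u ξ = fhat v ξ) : u = v := by
  classical
  funext m
  ext i j
  set s : Finset ℤ := hufin.toFinset ∪ hvfin.toFinset with hs
  have hu' : Function.support u ⊆ ↑s := by
    intro k hk
    simp only [hs, Finset.coe_union, Set.mem_union, Set.Finite.coe_toFinset]
    exact Or.inl hk
  have hv' : Function.support v ⊆ ↑s := by
    intro k hk
    simp only [hs, Finset.coe_union, Set.mem_union, Set.Finite.coe_toFinset]
    exact Or.inr hk
  by_cases hm : m ∈ s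
  · have k1 := key_scalar s (fun k => u k i j) m
    have k2 := key_scalar s (fun k => v k i j) m
    rw [if_pos hm] at k1 k2
    have key : ((2*Real.pi : ℝ):ℂ) * u m i j = ((2*Real.pi : ℝ):ℂ) * v m i j := by
      rw [← k1, ← k2]
      apply intervalIntegral.integral_congr
      intro ξ _
      simp only
      congr 1
      rw [← fhat_apply_eq_sum u hu', ← fhat_apply_eq_sum v hv', h ξ]
    have h2 : ((2*Real.pi : ℝ):ℂ) ≠ 0 := by
      simp [Real.pi_ne_zero]
    exact mul_left_cancel₀ h2 key
  · have h1 : u m = 0 := by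
      by_contra h0
      exact hm (hu' h0)
    have h2 : v m = 0 := by
      by_contra h0
      exact hm (hv' h0)
    rw [h1, h2]

lemma exi {r : ℕ} (N : ℕ) (a : ℤ → Matrix (Fin r) (Fin r) ℂ)
    (ha : ∀ k : ℤ, a k ≠ 0 → |k| ≤ (N : ℤ)) (n : ℕ) :
    ∃ c : ℤ → Matrix (Fin r) (Fin r) ℂ,
      (∀ k : ℤ, c k ≠ 0 → |k| ≤ ((2^n - 1) * N : ℤ)) ∧
      (∀ ξ : ℝ, fhat c ξ =
        (((List.range n).reverse).map (fun j => fhat a ((2 : ℝ) ^ j * ξ))).prod) := by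
  induction n with
  | zero =>
    refine ⟨fun k => if k = 0 then 1 else 0, ?_, ?_⟩
    · intro k hk
      have hk0 : k = 0 := by
        by_contra h0; simp [h0] at hk
      simp [hk0]
    · intro ξ
      rw [fhat, finsum_eq_single _ (0:ℤ) (by intro x hx; simp [hx])]
      simp
  | succ n ih =>
    obtain ⟨c, hcs, hcf⟩ := ih
    set M : ℤ := (2^n - 1) * N with hM
    set M' : ℤ := (2^(n+1) - 1) * N with hM'
    have hMN : 0 ≤ M := by
      have h2 : (0:ℤ) < 2^n := by positivity
      exact mul_nonneg (by omega) (by positivity)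
    set c' : ℤ → Matrix (Fin r) (Fin r) ℂ :=
      fun m => ∑ l ∈ Finset.Icc (-(N:ℤ)) N, a l * c (m - 2^n * l) with hc'
    have hbound : ∀ m : ℤ, c' m ≠ 0 → |m| ≤ M' := by
      intro m hm
      have hex : ∃ l ∈ Finset.Icc (-(N:ℤ)) N, a l * c (m - 2^n * l) ≠ 0 := by
        by_contra hcon
        push_neg at hcon
        exact hm (Finset.sum_eq_zero hcon)
      obtain ⟨l, _, hne⟩ := hex
      have hal : a l ≠ 0 := fun h => hne (by simp [h])
      have hcl : c (m - 2^n*l) ≠ 0 := fun h => hne (by simp [h])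
      have h1 : |l| ≤ (N:ℤ) := ha l hal
      have h2 : |m - 2^n*l| ≤ M := hcs _ hcl
      have h3 : |(2:ℤ)^n * l| ≤ 2^n * N := by
        rw [abs_mul, abs_pow, abs_two]
        exact mul_le_mul_of_nonneg_left h1 (by positivity)
      have h4 : |m| ≤ |m - 2^n*l| + |(2:ℤ)^n*l| := by
        have := abs_add_le (m - 2^n*l) (2^n*l)
        simpa using this
      have : |m| ≤ M + 2^n*N := le_trans h4 (add_le_add h2 h3)
      have hEq : M + 2^n*(N:ℤ) = M' := by rw [hM, hM']; ring
      omega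
    refine ⟨c', hbound, ?_⟩
    intro ξ
    have hsupp : Function.support c' ⊆ ↑(Finset.Icc (-M') M') := by
      intro m hm
      simp only [Finset.coe_Icc, Set.mem_Icc]
      exact abs_le.1 (hbound m hm)
    have hsuppc : Function.support c ⊆ ↑(Finset.Icc (-M) M) := by
      intro m hm
      simp only [Finset.coe_Icc, Set.mem_Icc]
      exact abs_le.1 (hcs m hm)
    have hsuppa : Function.support a ⊆ ↑(Finset.Icc (-(N:ℤ)) N) := by
      intro m hm
      simp only [Finset.coe_Icc, Set.mem_Icc]
      exact abs_le.1 (ha m hm)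
    rw [fhat_eq_sum c' hsupp ξ]
    have hswap : ∑ m ∈ Finset.Icc (-M') M', Complex.exp (-(Complex.I * (m:ℂ) * (ξ:ℂ))) • c' m
        = ∑ l ∈ Finset.Icc (-(N:ℤ)) N, ∑ m ∈ Finset.Icc (-M') M',
            Complex.exp (-(Complex.I * (m:ℂ) * (ξ:ℂ))) • (a l * c (m - 2^n * l)) := by
      rw [← Finset.sum_comm]
      refine Finset.sum_congr rfl fun m _ => ?_
      rw [hc', Finset.smul_sum]
    rw [hswap]
    have hinner : ∀ l ∈ Finset.Icc (-(N:ℤ)) N,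
        ∑ m ∈ Finset.Icc (-M') M', Complex.exp (-(Complex.I * (m:ℂ) * (ξ:ℂ))) • (a l * c (m - 2^n * l))
        = (Complex.exp (-(Complex.I * (l:ℂ) * (((2:ℝ)^n * ξ : ℝ):ℂ))) • a l) * fhat c ξ := by
      intro l hl
      have hlN : |l| ≤ (N:ℤ) := by
        rw [abs_le]; exact Finset.mem_Icc.1 hl
      have h3 : |(2:ℤ)^n * l| ≤ 2^n * N := by
        rw [abs_mul, abs_pow, abs_two]
        exact mul_le_mul_of_nonneg_left hlN (by positivity)
      have habs := abs_le.1 h3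
      have hsub2 : (Finset.Icc (-M) M).map (addLeftEmbedding (2^n * l)) ⊆ Finset.Icc (-M') M' := by
        rw [Finset.map_add_left_Icc]
        apply Finset.Icc_subset_Icc
        · have : M + 2^n*(N:ℤ) = M' := by rw [hM, hM']; ring
          omega
        · have : M + 2^n*(N:ℤ) = M' := by rw [hM, hM']; ring
          omega
      have hvan : ∀ m ∈ Finset.Icc (-M') M',
          m ∉ (Finset.Icc (-M) M).map (addLeftEmbedding (2^n * l)) →
          Complex.exp (-(Complex.I * (m:ℂ) * (ξ:ℂ))) • (a l * c (m - 2^n * l)) = 0 := by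
        intro m _ hm
        rw [Finset.map_add_left_Icc] at hm
        have : c (m - 2^n*l) = 0 := by
          by_contra h0
          have := abs_le.1 (hcs _ h0)
          rw [Finset.mem_Icc] at hm
          omega
        rw [this, mul_zero, smul_zero]
      rw [← Finset.sum_subset hsub2 hvan, Finset.sum_map]
      have hterm : ∀ k ∈ Finset.Icc (-M) M,
          Complex.exp (-(Complex.I * ((addLeftEmbedding (2^n * l) k : ℤ):ℂ) * (ξ:ℂ))) •
            (a l * c ((addLeftEmbedding (2^n * l) k) - 2^n * l))
          = (Complex.exp (-(Complex.I * (l:ℂ) * (((2:ℝ)^n * ξ : ℝ):ℂ))) • a l) *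
            (Complex.exp (-(Complex.I * (k:ℂ) * (ξ:ℂ))) • c k) := by
        intro k _
        have he : addLeftEmbedding (2^n * l) k = 2^n * l + k := rfl
        rw [he, smul_mul_smul_comm, ← Complex.exp_add]
        have h5 : (2:ℤ)^n * l + k - 2^n * l = k := by ring
        rw [h5]
        congr 2
        push_cast
        ring
      rw [Finset.sum_congr rfl hterm, ← Finset.mul_sum, ← fhat_eq_sum c hsuppc ξ]
    rw [Finset.sum_congr rfl hinner, ← Finset.sum_mul, ← fhat_eq_sum a hsuppa ((2:ℝ)^n * ξ)]
    rw [hcf ξ]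
    simp [List.range_succ]

lemma riemann {q : ℕ} (N : ℕ) (f : ℝ → Fin q → ℂ) (hfc : Continuous f)
    (hfs : ∀ x : ℝ, (N:ℝ) < |x| → f x = 0) :
    Filter.Tendsto (fun n : ℕ => ∑ k ∈ Finset.Icc (-(2^n*N:ℤ)) (2^n*N),
        ((2:ℝ)^n)⁻¹ • f (((2:ℝ)^n)⁻¹ * (k:ℝ)))
      Filter.atTop (nhds (∫ x : ℝ, f x)) := by
  classical
  set g : ℕ → ℝ → Fin q → ℂ :=
    fun n x => f (((2:ℝ)^n)⁻¹ * (⌈(2:ℝ)^n * x⌉ : ℝ)) with hg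
  obtain ⟨C, hC⟩ : ∃ C : ℝ, ∀ y : ℝ, ‖f y‖ ≤ C := by
    obtain ⟨C, hC⟩ := (isCompact_Icc (a := -(N:ℝ)) (b := (N:ℝ))).exists_bound_of_continuousOn
      hfc.continuousOn
    refine ⟨max C 0, fun y => ?_⟩
    by_cases hy : y ∈ Set.Icc (-(N:ℝ)) (N:ℝ)
    · exact le_trans (hC y hy) (le_max_left _ _)
    · have : (N:ℝ) < |y| := by
        simp only [Set.mem_Icc, not_and_or, not_le] at hy
        rcases hy with h | h
        · rw [abs_of_neg (by linarith [Nat.cast_nonneg (α := ℝ) N])]; linarith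
        · rw [abs_of_pos (by linarith [Nat.cast_nonneg (α := ℝ) N])]; linarith
      rw [hfs y this, norm_zero]
      exact le_max_right _ _
  have hT : ∀ n : ℕ, (0:ℝ) < (2:ℝ)^n := fun n => by positivity
  have hy1 : ∀ (n : ℕ) (x : ℝ), x ≤ ((2:ℝ)^n)⁻¹ * (⌈(2:ℝ)^n * x⌉ : ℝ) := by
    intro n x
    have h := Int.le_ceil ((2:ℝ)^n * x)
    calc x = ((2:ℝ)^n)⁻¹ * ((2:ℝ)^n * x) := by field_simp
    _ ≤ ((2:ℝ)^n)⁻¹ * (⌈(2:ℝ)^n * x⌉ : ℝ) :=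
        mul_le_mul_of_nonneg_left h (le_of_lt (inv_pos.2 (hT n)))
  have hy2 : ∀ (n : ℕ) (x : ℝ), ((2:ℝ)^n)⁻¹ * (⌈(2:ℝ)^n * x⌉ : ℝ) < x + ((2:ℝ)^n)⁻¹ := by
    intro n x
    have h := Int.ceil_lt_add_one ((2:ℝ)^n * x)
    have h2 : ((2:ℝ)^n)⁻¹ * (⌈(2:ℝ)^n * x⌉ : ℝ) < ((2:ℝ)^n)⁻¹ * ((2:ℝ)^n * x + 1) :=
      mul_lt_mul_of_pos_left h (inv_pos.2 (hT n))
    have h3 : ((2:ℝ)^n)⁻¹ * ((2:ℝ)^n * x + 1) = x + ((2:ℝ)^n)⁻¹ := by field_simp; try ring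
    linarith
  have hstepA : ∀ n : ℕ, ∫ x : ℝ, g n x = ∑ k ∈ Finset.Icc (-(2^n*N:ℤ)) (2^n*N),
      ((2:ℝ)^n)⁻¹ • f (((2:ℝ)^n)⁻¹ * (k:ℝ)) := by
    intro n
    set t : ℝ := (2:ℝ)^n with htdef
    have ht : (0:ℝ) < t := hT n
    have hgei : g n = fun x => ∑ k ∈ Finset.Icc (-(2^n*N:ℤ)) (2^n*N),
        Set.indicator (Set.Ioc (((k:ℝ)-1)/t) ((k:ℝ)/t)) (fun _ => f (t⁻¹ * (k:ℝ))) x := by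
      funext x
      have hind : ∀ k : ℤ, Set.indicator (Set.Ioc (((k:ℝ)-1)/t) ((k:ℝ)/t))
          (fun _ => f (t⁻¹ * (k:ℝ))) x = if ⌈t * x⌉ = k then f (t⁻¹ * (k:ℝ)) else 0 := by
        intro k
        rw [Set.indicator_apply]
        congr 1
        simp only [Set.mem_Ioc, eq_iff_iff]
        rw [div_lt_iff₀ ht, le_div_iff₀ ht, Int.ceil_eq_iff]
        constructor
        · rintro ⟨h1, h2⟩; exact ⟨by linarith [mul_comm x t], by linarith [mul_comm x t]⟩
        · rintro ⟨h1, h2⟩; exact ⟨by linarith [mul_comm x t], by linarith [mul_comm x t]⟩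
      simp only [hind]
      rw [Finset.sum_ite_eq]
      by_cases hmem : ⌈t * x⌉ ∈ Finset.Icc (-(2^n*N:ℤ)) (2^n*N)
      · rw [if_pos hmem]
      · rw [if_neg hmem]
        have hm : (2^n*(N:ℤ)) < |⌈t * x⌉| := by
          rw [Finset.mem_Icc] at hmem
          rcases abs_cases (⌈t * x⌉) with ⟨heq, h0⟩ | ⟨heq, h0⟩ <;> rw [heq] <;> omega
        have : (N:ℝ) < |t⁻¹ * (⌈t * x⌉ : ℝ)| := by
          rw [abs_mul, abs_of_pos (inv_pos.2 ht)]
          have h1 : ((2:ℝ)^n * N + 1) ≤ |(⌈t * x⌉ : ℝ)| := by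
            have : (2^n*(N:ℤ)) + 1 ≤ |⌈t * x⌉| := by
              rcases abs_cases (⌈t * x⌉) with ⟨heq, h0⟩ | ⟨heq, h0⟩ <;>
                rw [heq] at hm ⊢ <;> omega
            calc ((2:ℝ)^n * N + 1) = (((2^n*(N:ℤ)) + 1 : ℤ) : ℝ) := by push_cast; ring
            _ ≤ ((|⌈t * x⌉| : ℤ) : ℝ) := by exact_mod_cast this
            _ = |(⌈t * x⌉ : ℝ)| := by push_cast; ring
          have h2 : t⁻¹ * ((2:ℝ)^n * N + 1) ≤ t⁻¹ * |(⌈t * x⌉ : ℝ)| :=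
            mul_le_mul_of_nonneg_left h1 (le_of_lt (inv_pos.2 ht))
          have h3 : t⁻¹ * ((2:ℝ)^n * N + 1) = (N:ℝ) + t⁻¹ := by
            rw [htdef]; field_simp; try ring
          have h4 : (0:ℝ) < t⁻¹ := inv_pos.2 ht
          linarith
        rw [hg]
        simp only
        rw [hfs _ this]
    rw [hgei, MeasureTheory.integral_finset_sum]
    · refine Finset.sum_congr rfl fun k _ => ?_
      rw [MeasureTheory.integral_indicator_const _ measurableSet_Ioc]
      rw [measureReal_def, Real.volume_Ioc]
      have h5 : (k:ℝ)/t - ((k:ℝ)-1)/t = t⁻¹ := by field_simp; ring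
      rw [h5, ENNReal.toReal_ofReal (le_of_lt (inv_pos.2 ht))]
    · intro k _
      rw [MeasureTheory.integrable_indicator_iff measurableSet_Ioc]
      exact integrableOn_const measure_Ioc_lt_top.ne
  have hmeas : ∀ n : ℕ, AEStronglyMeasurable (g n) volume := by
    intro n
    apply Measurable.aestronglyMeasurable
    apply hfc.measurable.comp
    apply Measurable.const_mul
    exact measurable_from_top.comp (Int.measurable_ceil.comp (measurable_id.const_mul _))
  set bound : ℝ → ℝ := Set.indicator (Set.Icc (-(N:ℝ)-1) ((N:ℝ)+1)) (fun _ => C) with hbd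
  have hbound_int : Integrable bound volume := by
    rw [hbd, MeasureTheory.integrable_indicator_iff measurableSet_Icc]
    exact integrableOn_const measure_Icc_lt_top.ne
  have h_bound : ∀ n : ℕ, ∀ᵐ x : ℝ, ‖g n x‖ ≤ bound x := by
    intro n
    filter_upwards with x
    by_cases hx : x ∈ Set.Icc (-(N:ℝ)-1) ((N:ℝ)+1)
    · rw [hbd, Set.indicator_of_mem hx]
      exact hC _
    · rw [hbd, Set.indicator_of_notMem hx]
      have hxn : x < -(N:ℝ)-1 ∨ (N:ℝ)+1 < x := by
        simp only [Set.mem_Icc, not_and_or, not_le] at hx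
        tauto
      have hzero : g n x = 0 := by
        rw [hg]; simp only
        apply hfs
        have e1 := hy1 n x
        have e2 := hy2 n x
        have e3 : ((2:ℝ)^n)⁻¹ ≤ 1 := by
          rw [inv_le_one_iff₀]
          right
          exact one_le_pow₀ (by norm_num)
        rcases hxn with h | h
        · rw [abs_of_neg (by linarith [Nat.cast_nonneg (α := ℝ) N])]
          linarith
        · rw [abs_of_pos (by linarith [Nat.cast_nonneg (α := ℝ) N])]
          linarith
      rw [hzero, norm_zero]
  have h_lim : ∀ᵐ x : ℝ, Filter.Tendsto (fun n => g n x) Filter.atTop (nhds (f x)) := by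
    filter_upwards with x
    have hyx : Filter.Tendsto (fun n : ℕ => ((2:ℝ)^n)⁻¹ * (⌈(2:ℝ)^n * x⌉ : ℝ))
        Filter.atTop (nhds x) := by
      have hup : Filter.Tendsto (fun n : ℕ => x + ((2:ℝ)^n)⁻¹) Filter.atTop (nhds (x + 0)) := by
        apply Filter.Tendsto.const_add
        have : (fun n : ℕ => ((2:ℝ)^n)⁻¹) = fun n : ℕ => ((2:ℝ)⁻¹)^n := by
          funext n; rw [inv_pow]
        rw [this]
        exact tendsto_pow_atTop_nhds_zero_of_lt_one (by norm_num) (by norm_num)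
      rw [add_zero] at hup
      exact tendsto_of_tendsto_of_tendsto_of_le_of_le tendsto_const_nhds hup
        (fun n => hy1 n x) (fun n => le_of_lt (hy2 n x))
    exact (hfc.tendsto x).comp hyx
  have hdc := MeasureTheory.tendsto_integral_of_dominated_convergence bound hmeas hbound_int
    h_bound h_lim
  have heq : (fun n : ℕ => ∫ x : ℝ, g n x) = fun n : ℕ => ∑ k ∈ Finset.Icc (-(2^n*N:ℤ)) (2^n*N),
      ((2:ℝ)^n)⁻¹ • f (((2:ℝ)^n)⁻¹ * (k:ℝ)) := funext hstepA
  rwa [heq] at hdc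

lemma real_smul_pi {q : ℕ} (x : ℝ) (v : Fin q → ℂ) : x • v = (x:ℂ) • v := by
  funext i
  simp [Pi.smul_apply, Complex.real_smul]

/-- If `u_n := a_n ∗ u` (with `\widehat{a_n}(ξ) = \widehat{a}(2^{n−1}ξ)···\widehat{a}(ξ)`,
`a` and `u` supported in `[−N,N]`) satisfies
`sup_k ‖u_n(k)2^{(τ+1)n} − η(2^{−n}k)‖ → 0` for a continuous `η` supported in `[−N,N]`,
then `2^{τn}\widehat{u_n}(2^{−n}ξ) → \widehat{η}(ξ)` for every `ξ ∈ ℝ`. -/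
theorem fhat_un_tendsto_ft {r : ℕ} (N : ℕ) (a : ℤ → Matrix (Fin r) (Fin r) ℂ)
    (ha : ∀ k : ℤ, a k ≠ 0 → |k| ≤ (N : ℤ))
    (u : ℤ → Fin r → ℂ) (hu : ∀ k : ℤ, u k ≠ 0 → |k| ≤ (N : ℤ))
    (η : ℝ → Fin r → ℂ) (hηc : Continuous η) (hηs : ∀ x : ℝ, (N : ℝ) < |x| → η x = 0)
    (b : ℕ → ℤ → Matrix (Fin r) (Fin r) ℂ) (hb : ∀ n, (Function.support (b n)).Finite)
    (hbf : ∀ n : ℕ, ∀ ξ : ℝ, fhat (b n) ξ =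
      (((List.range n).reverse).map (fun j => fhat a ((2 : ℝ) ^ j * ξ))).prod)
    (τ : ℝ) (hτ : 0 ≤ τ)
    (hconv : ∀ ε : ℝ, 0 < ε → ∃ N₀ : ℕ, ∀ n ≥ N₀, ∀ k : ℤ,
      ‖(((2 : ℝ) ^ ((τ + 1) * (n : ℝ)) : ℝ) : ℂ) • convMV (b n) u k -
        η (((2 : ℝ) ^ n)⁻¹ * (k : ℝ))‖ < ε) :
    ∀ ξ : ℝ, Filter.Tendsto
      (fun n : ℕ => (((2 : ℝ) ^ (τ * (n : ℝ)) : ℝ) : ℂ) •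
        fhatV (convMV (b n) u) (((2 : ℝ) ^ n)⁻¹ * ξ))
      Filter.atTop (nhds (ft η ξ)) := by
  intro ξ
  classical
  -- support bound for b n
  have hbsupp : ∀ n : ℕ, ∀ k : ℤ, b n k ≠ 0 → |k| ≤ ((2^n - 1) * N : ℤ) := by
    intro n
    obtain ⟨c, hcs, hcf⟩ := exi N a ha n
    have hcfin : (Function.support c).Finite := by
      apply Set.Finite.subset (Set.finite_Icc (-((2^n-1)*N:ℤ)) ((2^n-1)*N))
      intro k hk
      exact Set.mem_Icc.2 (abs_le.1 (hcs k hk))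
    have hbc : b n = c :=
      coeff_eq_of_fhat_eq _ _ (hb n) hcfin (fun ξ' => by rw [hbf n ξ', hcf ξ'])
    rw [hbc]
    exact hcs
  -- support bound for u_n = b n ∗ u
  have hwsupp : ∀ (n : ℕ) (k : ℤ), convMV (b n) u k ≠ 0 → |k| ≤ (2^n * N : ℤ) := by
    intro n k hk
    by_contra hcon
    push_neg at hcon
    apply hk
    show (∑ᶠ l : ℤ, (b n (k - l)).mulVec (u l)) = 0
    apply finsum_eq_zero_of_forall_eq_zero
    intro l
    by_cases hl : u l = 0
    · rw [hl, Matrix.mulVec_zero]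
    · have h1 : |l| ≤ (N:ℤ) := hu l hl
      have h2 : ((2^n - 1) * N : ℤ) < |k - l| := by
        have h4 : |k| ≤ |k - l| + |l| := by
          have := abs_add_le (k - l) l
          simpa using this
        have hEq : ((2:ℤ)^n*N) = (2^n - 1)*N + N := by ring
        omega
      have hz : b n (k - l) = 0 := by
        by_contra h0
        exact absurd (hbsupp n _ h0) (not_le.2 h2)
      rw [hz, Matrix.zero_mulVec]
  -- finite-sum representation
  have hfhatV : ∀ (n : ℕ) (ξ' : ℝ), fhatV (convMV (b n) u) ξ' =
      ∑ k ∈ Finset.Icc (-(2^n*N:ℤ)) (2^n*N),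
        Complex.exp (-(Complex.I*(k:ℂ)*(ξ':ℂ))) • convMV (b n) u k := by
    intro n ξ'
    apply fhatV_eq_sum
    intro k hk
    simp only [Finset.coe_Icc, Set.mem_Icc]
    exact abs_le.1 (hwsupp n k hk)
  -- the integrand
  set f : ℝ → Fin r → ℂ := fun x => Complex.exp (-(Complex.I*(x:ℂ)*(ξ:ℂ))) • η x with hf
  have hfc : Continuous f := by
    refine (?_ : Continuous fun x : ℝ => Complex.exp (-(Complex.I*(x:ℂ)*(ξ:ℂ)))).smul hηc
    apply Complex.continuous_exp.comp
    exact ((continuous_const.mul Complex.continuous_ofReal).mul continuous_const).neg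
  have hfs : ∀ x : ℝ, (N:ℝ) < |x| → f x = 0 := by
    intro x hx
    rw [hf]
    simp [hηs x hx]
  have hft : ft η ξ = ∫ x : ℝ, f x := rfl
  set S : ℕ → Fin r → ℂ := fun n => ∑ k ∈ Finset.Icc (-(2^n*N:ℤ)) (2^n*N),
      ((2:ℝ)^n)⁻¹ • f (((2:ℝ)^n)⁻¹ * (k:ℝ)) with hS
  have hStend : Filter.Tendsto S Filter.atTop (nhds (ft η ξ)) := by
    rw [hft]
    exact riemann N f hfc hfs
  set T : ℕ → Fin r → ℂ := fun n => (((2:ℝ)^(τ*(n:ℝ)):ℝ):ℂ) •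
      fhatV (convMV (b n) u) (((2:ℝ)^n)⁻¹ * ξ) with hT
  -- key per-n difference representation
  have hTS : ∀ n : ℕ, T n - S n = ∑ k ∈ Finset.Icc (-(2^n*N:ℤ)) (2^n*N),
      Complex.exp (-(Complex.I*(k:ℂ)*(((((2:ℝ)^n)⁻¹ * ξ : ℝ)):ℂ))) •
        (((2:ℝ)^n)⁻¹ • ((((2:ℝ)^((τ+1)*(n:ℝ)):ℝ):ℂ) • convMV (b n) u k -
          η (((2:ℝ)^n)⁻¹ * (k:ℝ)))) := by
    intro n
    have h2n : ((2:ℝ)^n) ≠ 0 := by positivity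
    have hreal : (2:ℝ)^(τ*(n:ℝ)) = ((2:ℝ)^n)⁻¹ * (2:ℝ)^((τ+1)*(n:ℝ)) := by
      rw [show ((τ+1)*(n:ℝ)) = τ*(n:ℝ) + (n:ℝ) by ring, Real.rpow_add (by norm_num),
        Real.rpow_natCast]
      field_simp
    rw [hT, hS]
    simp only
    rw [hfhatV n (((2:ℝ)^n)⁻¹ * ξ), Finset.smul_sum, ← Finset.sum_sub_distrib]
    refine Finset.sum_congr rfl fun k _ => ?_
    funext i
    simp only [hf, Pi.smul_apply, Pi.sub_apply, smul_eq_mul, Complex.real_smul]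
    rw [show -(Complex.I*((((2:ℝ)^n)⁻¹*(k:ℝ) : ℝ):ℂ)*(ξ:ℂ))
        = -(Complex.I*(k:ℂ)*((((2:ℝ)^n)⁻¹*ξ : ℝ):ℂ)) from by push_cast; ring]
    rw [show (((2:ℝ)^(τ*(n:ℝ)) : ℝ):ℂ)
        = ((((2:ℝ)^n)⁻¹ : ℝ):ℂ) * (((2:ℝ)^((τ+1)*(n:ℝ)) : ℝ):ℂ) from by
      rw [← Complex.ofReal_mul, hreal]]
    ring
  suffices hdiff : Filter.Tendsto (fun n => T n - S n) Filter.atTop (nhds 0) by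
    have hTe : T = fun n => S n + (T n - S n) := by
      funext n
      abel
    rw [hTe]
    simpa using hStend.add hdiff
  rw [Metric.tendsto_atTop]
  intro ε hε
  have hden : (0:ℝ) < 2*(N:ℝ)+2 := by positivity
  obtain ⟨N₀, hN₀⟩ := hconv (ε/(2*(N:ℝ)+2)) (by positivity)
  refine ⟨N₀, fun n hn => ?_⟩
  rw [dist_eq_norm, sub_zero, hTS n]
  set K := Finset.Icc (-(2^n*N:ℤ)) (2^n*N) with hK
  have hpos : (0:ℤ) ≤ 2^n*N := by positivity
  have hKne : K.Nonempty := ⟨0, by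
    rw [hK, Finset.mem_Icc]
    omega⟩
  have h2n : (0:ℝ) < (2:ℝ)^n := by positivity
  have hcard : (K.card : ℝ) = 2*((2:ℝ)^n)*(N:ℝ) + 1 := by
    have := Int.card_Icc_of_le (-(2^n*N:ℤ)) (2^n*N) (by omega)
    have hcast : ((K.card : ℤ) : ℝ) = (((2^n*N:ℤ) + 1 - (-(2^n*N:ℤ))) : ℤ) := by
      rw [hK]; exact_mod_cast this
    push_cast at hcast
    push_cast
    linarith
  calc ‖∑ k ∈ K, Complex.exp (-(Complex.I*(k:ℂ)*(((((2:ℝ)^n)⁻¹ * ξ : ℝ)):ℂ))) •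
        (((2:ℝ)^n)⁻¹ • ((((2:ℝ)^((τ+1)*(n:ℝ)):ℝ):ℂ) • convMV (b n) u k -
          η (((2:ℝ)^n)⁻¹ * (k:ℝ))))‖
      ≤ ∑ k ∈ K, ‖Complex.exp (-(Complex.I*(k:ℂ)*(((((2:ℝ)^n)⁻¹ * ξ : ℝ)):ℂ))) •
        (((2:ℝ)^n)⁻¹ • ((((2:ℝ)^((τ+1)*(n:ℝ)):ℝ):ℂ) • convMV (b n) u k -
          η (((2:ℝ)^n)⁻¹ * (k:ℝ))))‖ := norm_sum_le _ _
    _ < ∑ _k ∈ K, ((2:ℝ)^n)⁻¹ * (ε/(2*(N:ℝ)+2)) := by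
        apply Finset.sum_lt_sum_of_nonempty hKne
        intro k _
        rw [norm_smul, norm_exp_aux, one_mul, norm_smul, Real.norm_eq_abs,
          abs_of_pos (inv_pos.2 h2n)]
        exact mul_lt_mul_of_pos_left (hN₀ n hn k) (inv_pos.2 h2n)
    _ = (K.card : ℝ) * (((2:ℝ)^n)⁻¹ * (ε/(2*(N:ℝ)+2))) := by
        rw [Finset.sum_const, nsmul_eq_mul]
    _ ≤ (2*(N:ℝ)+1) * (ε/(2*(N:ℝ)+2)) := by
        rw [hcard, ← mul_assoc]
        apply mul_le_mul_of_nonneg_right _ (by positivity)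
        have hinv : ((2:ℝ)^n)⁻¹ ≤ 1 := by
          rw [inv_le_one_iff₀]
          right
          exact one_le_pow₀ (by norm_num)
        have : (2*((2:ℝ)^n)*(N:ℝ) + 1) * ((2:ℝ)^n)⁻¹ = 2*(N:ℝ) + ((2:ℝ)^n)⁻¹ := by
          field_simp
        rw [this]
        linarith
    _ < ε := by
        have : (2*(N:ℝ)+2) * (ε/(2*(N:ℝ)+2)) = ε := by
          field_simp
        calc (2*(N:ℝ)+1) * (ε/(2*(N:ℝ)+2)) < (2*(N:ℝ)+2) * (ε/(2*(N:ℝ)+2)) := by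
              apply mul_lt_mul_of_pos_right _ (by positivity)
              linarith
          _ = ε := this
end

section
/- Let η : ℝ → ℂ^r be compactly supported, continuous, not identically zero, satisfying \widehat{η}(2ξ) = 2^τ \widehat{a}(ξ) \widehat{η}(ξ) for a matrix mask a ∈ (ℓ₀)^{r×r} and τ ∈ ℝ. Let j ∈ ℕ₀ be the smallest integer with \widehat{η}^{(j)}(0) ≠ 0. Then \widehat{a}(0) \widehat{η}^{(j)}(0) = 2^{j−τ} \widehat{η}^{(j)}(0); in particular, 2^{j−τ} is an eigenvalue of \widehat{a}(0). -/
open MeasureTheory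

open scoped FourierTransform Real

lemma ft_eq {q : ℕ} (f : ℝ → Fin q → ℂ) (ξ : ℝ) :
    ft f ξ = 𝓕 f (ξ / (2 * π)) := by
  rw [Real.fourier_eq', ft]
  congr 1
  ext x i
  have hπ : (2 * π : ℝ) ≠ 0 := by positivity
  have harg : (-2 * π * (inner ℝ x (ξ / (2 * π)) : ℝ) : ℝ) = -(x * ξ) := by
    simp only [RCLike.inner_apply, conj_trivial]
    field_simp
  rw [harg]
  push_cast
  ring_nf

lemma contDiff_ft {q : ℕ} {f : ℝ → Fin q → ℂ} (hc : Continuous f)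
    (hs : HasCompactSupport f) : ContDiff ℝ (⊤ : ℕ∞) (ft f) := by
  have h1 : ContDiff ℝ (⊤ : ℕ∞) (𝓕 f) := by
    apply Real.contDiff_fourier (N := ⊤)
    intro n _
    apply Continuous.integrable_of_hasCompactSupport
    · exact (continuous_norm.pow n).mul hc.norm
    · exact HasCompactSupport.mul_left hs.norm
  have h2 : ft f = fun ξ => 𝓕 f (ξ / (2 * π)) := funext fun ξ => ft_eq f ξ
  rw [h2]
  exact h1.comp (contDiff_id.div_const _)

lemma iteratedDeriv_clm {F G : Type*} [NormedAddCommGroup F] [NormedSpace ℝ F]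
    [NormedAddCommGroup G] [NormedSpace ℝ G] (L : F →L[ℝ] G) {f : ℝ → F} {n : ℕ}
    (hf : ContDiff ℝ (⊤ : ℕ∞) f) (x : ℝ) :
    iteratedDeriv n (fun t => L (f t)) x = L (iteratedDeriv n f x) := by
  rw [iteratedDeriv_eq_iteratedFDeriv, iteratedDeriv_eq_iteratedFDeriv,
    show (fun t => L (f t)) = L ∘ f from rfl,
    L.iteratedFDeriv_comp_left hf.contDiffAt (by exact_mod_cast le_top)]
  rfl

lemma iteratedDeriv_fsum {ι : Type*} (s : Finset ι) (f : ι → ℝ → ℂ)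
    (h : ∀ i ∈ s, ContDiff ℝ (⊤ : ℕ∞) (f i)) (n : ℕ) (x : ℝ) :
    iteratedDeriv n (fun t => ∑ i ∈ s, f i t) x = ∑ i ∈ s, iteratedDeriv n (f i) x := by
  rw [iteratedDeriv_eq_iteratedFDeriv]
  rw [iteratedFDeriv_sum (fun i hi => (h i hi).of_le
    (by exact_mod_cast le_top : ((n:ℕ∞) : WithTop ℕ∞) ≤ ((⊤:ℕ∞) : WithTop ℕ∞)))]
  simp [iteratedDeriv_eq_iteratedFDeriv]

lemma leibniz_mul (f g : ℝ → ℂ) (hf : ContDiff ℝ (⊤ : ℕ∞) f) (hg : ContDiff ℝ (⊤ : ℕ∞) g)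
    (n : ℕ) :
    iteratedDeriv n (fun x => f x * g x) = fun x =>
      ∑ k ∈ Finset.range (n + 1),
        (n.choose k : ℂ) * (iteratedDeriv k f x * iteratedDeriv (n - k) g x) := by
  have hd : ∀ (m : ℕ) (h : ℝ → ℂ), ContDiff ℝ (⊤ : ℕ∞) h →
      ∀ x, DifferentiableAt ℝ (iteratedDeriv m h) x := by
    intro m h hh x
    exact (hh.differentiable_iteratedDeriv m
      (by exact_mod_cast lt_top_iff_ne_top.2 (by simp))).differentiableAt
  induction n with
  | zero => simp
  | succ n ih =>
    funext x
    rw [iteratedDeriv_succ, ih]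
    rw [deriv_fun_sum (fun k _ => (show DifferentiableAt ℝ (fun y => (n.choose k : ℂ) *
      (iteratedDeriv k f y * iteratedDeriv (n - k) g y)) x from
      ((hd k f hf x).mul (hd (n - k) g hg x)).const_mul _))]
    have step : ∀ k, deriv (fun x => (n.choose k : ℂ) *
        (iteratedDeriv k f x * iteratedDeriv (n - k) g x)) x =
        (n.choose k : ℂ) * (iteratedDeriv (k+1) f x * iteratedDeriv (n - k) g x)
        + (n.choose k : ℂ) * (iteratedDeriv k f x * iteratedDeriv (n - k + 1) g x) := by
      intro k
      rw [deriv_const_mul _ ((hd k f hf x).fun_mul (hd (n - k) g hg x)),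
        deriv_fun_mul (hd k f hf x) (hd (n - k) g hg x), ← iteratedDeriv_succ, ← iteratedDeriv_succ]
      ring
    simp only [step]
    rw [Finset.sum_add_distrib]
    set T : ℕ → ℂ := fun k => iteratedDeriv k f x * iteratedDeriv (n + 1 - k) g x with hT
    have e1 : ∑ k ∈ Finset.range (n + 1),
        (n.choose k : ℂ) * (iteratedDeriv (k+1) f x * iteratedDeriv (n - k) g x)
        = ∑ k ∈ Finset.range (n + 1), (n.choose k : ℂ) * T (k + 1) := by
      refine Finset.sum_congr rfl fun k hk => ?_
      simp [hT, Nat.succ_sub_succ]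
    have e2 : ∑ k ∈ Finset.range (n + 1),
        (n.choose k : ℂ) * (iteratedDeriv k f x * iteratedDeriv (n - k + 1) g x)
        = ∑ k ∈ Finset.range (n + 1), (n.choose k : ℂ) * T k := by
      refine Finset.sum_congr rfl fun k hk => ?_
      have hk' : k ≤ n := Nat.lt_succ_iff.mp (Finset.mem_range.mp hk)
      have : n - k + 1 = n + 1 - k := by omega
      simp [hT, this]
    rw [e1, e2]
    have key : ∑ k ∈ Finset.range (n + 2), ((n+1).choose k : ℂ) * T k
        = ∑ k ∈ Finset.range (n + 1), (n.choose k : ℂ) * T (k + 1)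
          + ∑ k ∈ Finset.range (n + 1), (n.choose k : ℂ) * T k := by
      rw [Finset.sum_range_succ' (fun k => ((n+1).choose k : ℂ) * T k) (n + 1)]
      have hc : ∀ k, (((n+1).choose (k+1) : ℕ) : ℂ) = (n.choose k : ℂ) + (n.choose (k+1) : ℂ) := by
        intro k; exact_mod_cast congrArg Nat.cast (Nat.choose_succ_succ n k)
      simp only [hc, add_mul]
      rw [Finset.sum_add_distrib]
      have h2 : ∑ k ∈ Finset.range (n + 1), (n.choose (k+1) : ℂ) * T (k + 1)
          + ((n+1).choose 0 : ℂ) * T 0 = ∑ k ∈ Finset.range (n + 1), (n.choose k : ℂ) * T k := by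
        have := Finset.sum_range_succ' (fun k => (n.choose k : ℂ) * T k) (n + 1)
        rw [Finset.sum_range_succ] at this
        simp only [Nat.choose_succ_self, Nat.cast_zero, zero_mul, add_zero] at this
        simp only [Nat.choose_zero_right, Nat.cast_one, one_mul] at this ⊢
        linear_combination -this
      linear_combination h2
    exact key.symm

/-- If `η ≢ 0` is compactly supported, continuous, with
`\widehat{η}(2ξ) = 2^τ \widehat{a}(ξ)\widehat{η}(ξ)`, and `j` is the smallest integer with
`\widehat{η}^{(j)}(0) ≠ 0`, then `\widehat{a}(0)\widehat{η}^{(j)}(0) = 2^{j−τ}\widehat{η}^{(j)}(0)`;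
in particular `2^{j−τ}` is an eigenvalue of `\widehat{a}(0)`. -/
theorem eigenvalue_from_limit {r : ℕ} (a : ℤ → Matrix (Fin r) (Fin r) ℂ)
    (ha : (Function.support a).Finite)
    (η : ℝ → Fin r → ℂ) (hηc : Continuous η) (hηs : HasCompactSupport η)
    (hηne : ¬ ∀ x : ℝ, η x = 0) (τ : ℝ)
    (href : ∀ ξ : ℝ, ft η (2 * ξ) = (((2 : ℝ) ^ τ : ℝ) : ℂ) • (fhat a ξ).mulVec (ft η ξ))
    (j : ℕ) (hj0 : iteratedDeriv j (ft η) 0 ≠ 0)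
    (hjmin : ∀ l < j, iteratedDeriv l (ft η) 0 = 0) :
    (fhat a 0).mulVec (iteratedDeriv j (ft η) 0) =
      (((2 : ℝ) ^ ((j : ℝ) - τ) : ℝ) : ℂ) • iteratedDeriv j (ft η) 0 ∧
    ((((2 : ℝ) ^ ((j : ℝ) - τ) : ℝ) : ℂ)) ∈ spectrum ℂ (fhat a 0) := by
  classical
  set s : Finset ℤ := ha.toFinset with hs
  -- fhat entrywise as a finite sum
  have hfhat : ∀ (ξ : ℝ) (i m : Fin r),
      fhat a ξ i m = ∑ k ∈ s, Complex.exp (-(Complex.I * (k : ℂ) * (ξ : ℂ))) * a k i m := by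
    intro ξ i m
    have hsupp : (Function.support fun k : ℤ =>
        Complex.exp (-(Complex.I * (k : ℂ) * (ξ : ℂ))) • a k) ⊆ (s : Set ℤ) := by
      intro k hk
      rw [hs, Set.Finite.coe_toFinset]
      simp only [Function.mem_support] at hk ⊢
      intro hak
      exact hk (by rw [hak, smul_zero])
    rw [fhat, finsum_eq_sum_of_support_subset _ hsupp]
    rw [Matrix.sum_apply]
    rfl
  -- the scalar component functions of fhat
  set g : Fin r → Fin r → ℝ → ℂ := fun i m ξ =>
    ∑ k ∈ s, Complex.exp (-(Complex.I * (k : ℂ) * (ξ : ℂ))) * a k i m with hg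
  have hgsmooth : ∀ i m, ContDiff ℝ (⊤ : ℕ∞) (g i m) := by
    intro i m
    apply ContDiff.sum
    intro k _
    have h1 : ContDiff ℝ (⊤ : ℕ∞) fun ξ : ℝ => -(Complex.I * (k : ℂ) * (ξ : ℂ)) :=
      (contDiff_const.mul Complex.ofRealCLM.contDiff).neg
    exact (h1.cexp).mul contDiff_const
  -- component functions of ft η
  have hFsmooth : ContDiff ℝ (⊤ : ℕ∞) (ft η) := contDiff_ft hηc hηs
  set F : Fin r → ℝ → ℂ := fun m ξ => ft η ξ m with hF
  have hFm : ∀ m, ContDiff ℝ (⊤ : ℕ∞) (F m) := by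
    intro m
    exact (ContinuousLinearMap.proj m).contDiff.comp hFsmooth
  have hFd : ∀ (l : ℕ) (m : Fin r) (x : ℝ),
      iteratedDeriv l (F m) x = iteratedDeriv l (ft η) x m := by
    intro l m x
    exact iteratedDeriv_clm (ContinuousLinearMap.proj m) hFsmooth x
  set D : Fin r → ℂ := iteratedDeriv j (ft η) 0 with hD
  -- component equation
  have hcomp : ∀ (i : Fin r),
      (2:ℝ)^j • D i = (((2:ℝ)^τ : ℝ) : ℂ) * ∑ m, fhat a 0 i m * D m := by
    intro i
    have heq : (fun ξ : ℝ => F i (2 * ξ)) =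
        fun ξ : ℝ => (((2:ℝ)^τ : ℝ) : ℂ) * ∑ m, g i m ξ * F m ξ := by
      funext ξ
      have := congrFun (href ξ) i
      simp only [Pi.smul_apply, Matrix.mulVec, dotProduct] at this
      rw [hF]
      simp only []
      rw [this, smul_eq_mul]
      congr 1
      refine Finset.sum_congr rfl fun m _ => ?_
      exact congrArg (· * ft η ξ m) (hfhat ξ i m)
    -- differentiate j times at 0
    have hL : iteratedDeriv j (fun ξ : ℝ => F i (2 * ξ)) 0 = (2:ℝ)^j • D i := by
      rw [congrFun (iteratedDeriv_comp_const_smul (f := F i) (n := j)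
        ((hFm i).of_le (by exact_mod_cast le_top :
          ((j:ℕ∞) : WithTop ℕ∞) ≤ ((⊤:ℕ∞) : WithTop ℕ∞))) 2) 0,
        mul_zero, hFd j i 0, hD]
    have hR : iteratedDeriv j
        (fun ξ : ℝ => (((2:ℝ)^τ : ℝ) : ℂ) * ∑ m, g i m ξ * F m ξ) 0
        = (((2:ℝ)^τ : ℝ) : ℂ) * ∑ m, fhat a 0 i m * D m := by
      rw [show (fun ξ : ℝ => (((2:ℝ)^τ : ℝ) : ℂ) * ∑ m, g i m ξ * F m ξ)
          = (((2:ℝ)^τ : ℝ) : ℂ) • (fun ξ : ℝ => ∑ m, g i m ξ * F m ξ) from rfl]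
      rw [← iteratedDerivWithin_univ, iteratedDerivWithin_const_smul (Set.mem_univ (0:ℝ))
        uniqueDiffOn_univ ((((2:ℝ)^τ : ℝ) : ℂ))
        (((ContDiff.sum (fun m _ => ((hgsmooth i m).mul (hFm m)))).of_le
          (by exact_mod_cast le_top :
            ((j:ℕ∞) : WithTop ℕ∞) ≤ ((⊤:ℕ∞) : WithTop ℕ∞))).contDiffWithinAt),
        iteratedDerivWithin_univ, smul_eq_mul]
      congr 1
      rw [iteratedDeriv_fsum Finset.univ (fun m ξ => g i m ξ * F m ξ)
        (fun m _ => (hgsmooth i m).mul (hFm m)) j 0]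
      refine Finset.sum_congr rfl fun m _ => ?_
      rw [leibniz_mul (g i m) (F m) (hgsmooth i m) (hFm m) j]
      beta_reduce
      rw [Finset.sum_eq_single 0]
      · simp only [Nat.choose_zero_right, Nat.cast_one, one_mul, Nat.sub_zero,
          iteratedDeriv_zero]
        rw [hFd j m 0, ← hD, hfhat 0 i m]
      · intro k hk hk0
        have hkj : k ≤ j := Nat.lt_succ_iff.mp (Finset.mem_range.mp hk)
        have : j - k < j := by omega
        rw [hFd (j - k) m 0, hjmin _ this]
        simp
      · intro h0
        exact absurd (Finset.mem_range.mpr (Nat.succ_pos j)) h0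
    rw [← hL, heq, hR]
  -- rewrite as the eigenvalue equation
  have hpow : (((2:ℝ) ^ ((j:ℝ) - τ) : ℝ) : ℂ) * (((2:ℝ)^τ : ℝ) : ℂ) = ((2:ℝ)^j : ℝ) := by
    rw [← Complex.ofReal_mul, ← Real.rpow_add two_pos, sub_add_cancel, Real.rpow_natCast]
  have hmain : (fhat a 0).mulVec D = (((2:ℝ) ^ ((j:ℝ) - τ) : ℝ) : ℂ) • D := by
    funext i
    have h := hcomp i
    have h2τ : (((2:ℝ)^τ : ℝ) : ℂ) ≠ 0 := by
      simp only [ne_eq, Complex.ofReal_eq_zero]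
      positivity
    simp only [Matrix.mulVec, dotProduct, Pi.smul_apply, smul_eq_mul]
    have : (((2:ℝ)^τ : ℝ) : ℂ) * ∑ m, fhat a 0 i m * D m
        = (((2:ℝ)^τ : ℝ) : ℂ) * ((((2:ℝ) ^ ((j:ℝ) - τ) : ℝ) : ℂ) * D i) := by
      rw [← h]
      have : ((2:ℝ)^j : ℝ) • D i = (((2:ℝ)^j : ℝ) : ℂ) * D i := by
        rw [Complex.real_smul]
      rw [this, ← hpow]
      ring
    exact mul_left_cancel₀ h2τ this
  refine ⟨hmain, ?_⟩
  rw [← AlgEquiv.spectrum_eq (Matrix.toLinAlgEquiv' (R := ℂ) (n := Fin r)) (fhat a 0),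
    ← Module.End.hasEigenvalue_iff_mem_spectrum]
  apply Module.End.hasEigenvalue_of_hasEigenvector (x := D)
  constructor
  · rw [Module.End.mem_eigenspace_iff]
    rw [show (Matrix.toLinAlgEquiv' (fhat a 0)) D = (fhat a 0).mulVec D from
      Matrix.toLinAlgEquiv'_apply _ _, hmain]
  · exact hj0
end
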